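/- arXiv:1807.07707 — 6 statements merged into one kernel-verified Lean document; each statement's English description precedes it below -/
import Mathlib

section
/- For all real constants a > 0 and b > 0, ∫_0^∞ e^{-bx} log₂(1 + ax) dx = (1/b) · C₁(a/b). -/
open Real MeasureTheory Set Filter Asymptotics Topology

/-- `C₁(x) = (1/ln 2) · e^{1/x} · ∫_1^∞ t⁻¹ e^{-t/x} dt`. -/
noncomputable def C1 (x : ℝ) : ℝ :=
  (1 / Real.log 2) * Real.exp (1 / x) * ∫ t in Set.Ioi (1:ℝ), t⁻¹ * Real.exp (-t / x)

lemma tendsto_exp_neg_mul_log {c : ℝ} (hc : 0 < c) :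
    Tendsto (fun u : ℝ => Real.exp (-c * u) * Real.log u) atTop (𝓝 0) := by
  have h1 : Tendsto (fun u : ℝ => (c * u) * Real.exp (-(c * u))) atTop (𝓝 0) := by
    have := (tendsto_pow_mul_exp_neg_atTop_nhds_zero 1).comp
      (tendsto_id.const_mul_atTop hc)
    simpa [Function.comp_def] using this
  have h2 : Tendsto (fun u : ℝ => u * Real.exp (-c * u)) atTop (𝓝 0) := by
    have h3 := h1.div_const c
    rw [zero_div] at h3
    refine h3.congr (fun u => ?_)
    rw [neg_mul]
    field_simp
  refine squeeze_zero_norm' ?_ h2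
  filter_upwards [eventually_ge_atTop (1:ℝ)] with u hu
  have hlog : |Real.log u| ≤ u := by
    rw [abs_of_nonneg (Real.log_nonneg hu)]
    exact (Real.log_le_sub_one_of_pos (by linarith)).trans (by linarith)
  calc ‖Real.exp (-c * u) * Real.log u‖ = Real.exp (-c * u) * |Real.log u| := by
        rw [norm_mul, Real.norm_eq_abs, abs_of_pos (Real.exp_pos _), Real.norm_eq_abs]
    _ ≤ Real.exp (-c * u) * u :=
        mul_le_mul_of_nonneg_left hlog (Real.exp_pos _).le
    _ = u * Real.exp (-c * u) := mul_comm _ _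

lemma integrableOn_exp_neg_mul_log {c : ℝ} (hc : 0 < c) :
    IntegrableOn (fun u : ℝ => Real.exp (-c * u) * Real.log u) (Set.Ioi 1) := by
  apply integrable_of_isBigO_exp_neg (b := c / 2) (by positivity)
  · exact (Real.continuous_exp.comp (continuous_const.mul continuous_id)).continuousOn.mul
      (Real.continuousOn_log.mono (fun x hx => by
        simp only [Set.mem_compl_iff, Set.mem_singleton_iff]
        intro h; rw [h] at hx; exact absurd hx.out (by norm_num)))
  · have h0 : Tendsto (fun u : ℝ => Real.exp (-(c / 2) * u) * Real.log u) atTop (𝓝 0) :=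
      tendsto_exp_neg_mul_log (by positivity)
    have := (h0.isBigO_one ℝ).mul (isBigO_refl (fun u : ℝ => Real.exp (-(c / 2) * u)) atTop)
    refine this.congr (fun u => ?_) (fun u => one_mul _)
    rw [show -c * u = -(c/2)*u + -(c/2)*u by ring, Real.exp_add]; ring

lemma integrableOn_inv_mul_exp_neg {c : ℝ} (hc : 0 < c) :
    IntegrableOn (fun u : ℝ => u⁻¹ * Real.exp (-c * u)) (Set.Ioi 1) := by
  apply integrable_of_isBigO_exp_neg hc
  · exact (continuousOn_inv₀.mono (fun x hx => by
      simp only [Set.mem_compl_iff, Set.mem_singleton_iff]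
      intro h; rw [h] at hx; exact absurd hx.out (by norm_num))).mul
      (Real.continuous_exp.comp (continuous_const.mul continuous_id)).continuousOn
  · refine IsBigO.of_bound 1 ?_
    filter_upwards [eventually_ge_atTop (1:ℝ)] with u hu
    have hu0 : (0:ℝ) < u := by linarith
    have h1 : u⁻¹ ≤ 1 := inv_le_one_of_one_le₀ hu
    have h2 := mul_le_mul_of_nonneg_right h1 (Real.exp_pos (-c * u)).le
    rw [one_mul] at h2
    simpa [abs_of_pos (Real.exp_pos _), abs_of_pos hu0] using h2

lemma key_ibp {c : ℝ} (hc : 0 < c) :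
    ∫ u in Set.Ioi (1:ℝ), Real.exp (-c * u) * Real.log u
      = c⁻¹ * ∫ u in Set.Ioi (1:ℝ), u⁻¹ * Real.exp (-c * u) := by
  set F : ℝ → ℝ := fun u => -c⁻¹ * (Real.exp (-c * u) * Real.log u) with hF
  set f' : ℝ → ℝ := fun u =>
    Real.exp (-c * u) * Real.log u - c⁻¹ * (u⁻¹ * Real.exp (-c * u)) with hf'
  have hderiv : ∀ u : ℝ, 0 < u → HasDerivAt F (f' u) u := by
    intro u hu
    have h1 : HasDerivAt (fun u : ℝ => Real.exp (-c * u)) (-c * Real.exp (-c * u)) u := by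
      simpa [mul_comm] using (((hasDerivAt_id u).const_mul (-c)).exp)
    have h2 : HasDerivAt Real.log u⁻¹ u := Real.hasDerivAt_log hu.ne'
    have := (h1.fun_mul h2).const_mul (-c⁻¹)
    refine this.congr_deriv ?_
    simp only [f']
    field_simp
    ring
  have hI1 := integrableOn_exp_neg_mul_log hc
  have hI2 := integrableOn_inv_mul_exp_neg hc
  have hIf' : IntegrableOn f' (Set.Ioi 1) := hI1.sub (hI2.const_mul _)
  have htend : Tendsto F atTop (𝓝 0) := by
    have h := (tendsto_exp_neg_mul_log hc).const_mul (-c⁻¹)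
    rw [mul_zero] at h
    exact h
  have hcont : ContinuousWithinAt F (Set.Ici 1) 1 :=
    (hderiv 1 one_pos).continuousAt.continuousWithinAt
  have h0 := integral_Ioi_of_hasDerivAt_of_tendsto hcont
    (fun u hu => hderiv u (lt_trans one_pos hu.out)) hIf' htend
  have hF1 : F 1 = 0 := by simp [hF]
  rw [hF1, sub_zero] at h0
  have hsplit : ∫ u in Set.Ioi (1:ℝ), f' u
      = (∫ u in Set.Ioi (1:ℝ), Real.exp (-c * u) * Real.log u)
        - c⁻¹ * ∫ u in Set.Ioi (1:ℝ), u⁻¹ * Real.exp (-c * u) := by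
    rw [integral_sub hI1 (hI2.const_mul _), integral_const_mul]
  rw [hsplit] at h0
  linarith

theorem stmt1 (a b : ℝ) (ha : 0 < a) (hb : 0 < b) :
    ∫ x in Set.Ioi (0:ℝ), Real.exp (-b * x) * Real.logb 2 (1 + a * x)
      = (1 / b) * C1 (a / b) := by
  set c : ℝ := b / a with hc
  have hcpos : 0 < c := div_pos hb ha
  -- Step 1: substitute y = a * x
  have step1 : ∫ x in Set.Ioi (0:ℝ), Real.exp (-b * x) * Real.logb 2 (1 + a * x)
      = a⁻¹ * ∫ y in Set.Ioi (0:ℝ), Real.exp (-c * y) * Real.logb 2 (1 + y) := by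
    have h := integral_comp_mul_left_Ioi
      (fun y => Real.exp (-c * y) * Real.logb 2 (1 + y)) 0 ha
    rw [mul_zero] at h
    have heq : ∫ x in Set.Ioi (0:ℝ), Real.exp (-b * x) * Real.logb 2 (1 + a * x)
        = ∫ x in Set.Ioi (0:ℝ),
            (fun y => Real.exp (-c * y) * Real.logb 2 (1 + y)) (a * x) := by
      apply setIntegral_congr_fun measurableSet_Ioi
      intro x _
      simp only
      congr 2
      field_simp [hc]
      rw [hc]; field_simp
    rw [heq, h, smul_eq_mul]
  -- Step 2: shift u = y + 1
  have step2 : ∫ y in Set.Ioi (0:ℝ), Real.exp (-c * y) * Real.logb 2 (1 + y)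
      = ∫ u in Set.Ioi (1:ℝ), Real.exp (-c * (u - 1)) * Real.logb 2 u := by
    have hmp : MeasurePreserving (fun x : ℝ => x + 1) volume volume :=
      measurePreserving_add_right volume 1
    have hemb : MeasurableEmbedding (fun x : ℝ => x + 1) :=
      (Homeomorph.addRight (1:ℝ)).measurableEmbedding
    have h := hmp.setIntegral_preimage_emb hemb
      (fun u => Real.exp (-c * (u - 1)) * Real.logb 2 u) (Set.Ioi 1)
    have hpre : (fun x : ℝ => x + 1) ⁻¹' Set.Ioi 1 = Set.Ioi 0 := by
      ext x; simp
    rw [hpre] at h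
    rw [← h]
    apply setIntegral_congr_fun measurableSet_Ioi
    intro x _
    simp only
    rw [add_sub_cancel_right, add_comm]
  -- Step 3: pull out constants
  have step3 : ∫ u in Set.Ioi (1:ℝ), Real.exp (-c * (u - 1)) * Real.logb 2 u
      = Real.exp c * (1 / Real.log 2) *
          ∫ u in Set.Ioi (1:ℝ), Real.exp (-c * u) * Real.log u := by
    rw [← integral_const_mul]
    apply setIntegral_congr_fun measurableSet_Ioi
    intro u _
    simp only [Real.logb]
    rw [show -c * (u - 1) = -c * u + c by ring, Real.exp_add]
    ring
  have step4 : (∫ t in Set.Ioi (1:ℝ), t⁻¹ * Real.exp (-t / (a / b)))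
      = ∫ u in Set.Ioi (1:ℝ), u⁻¹ * Real.exp (-c * u) := by
    apply setIntegral_congr_fun measurableSet_Ioi
    intro t _
    congr 1
    rw [hc]
    field_simp
  rw [step1, step2, step3, key_ibp hcpos, C1, step4]
  have h5 : (1:ℝ) / (a / b) = c := by rw [hc]; field_simp
  rw [h5]
  have key : a⁻¹ * c⁻¹ = 1 / b := by
    rw [hc, inv_div]
    field_simp
  calc a⁻¹ * (Real.exp c * (1 / Real.log 2) *
        (c⁻¹ * ∫ u in Set.Ioi (1:ℝ), u⁻¹ * Real.exp (-c * u)))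
      = (a⁻¹ * c⁻¹) * (Real.exp c * (1 / Real.log 2) *
        ∫ u in Set.Ioi (1:ℝ), u⁻¹ * Real.exp (-c * u)) := by ring
    _ = _ := by rw [key]; ring
end

section
/- The function C₁ is strictly increasing on (0,∞): for all real x, y with 0 < x < y, one has C₁(x) < C₁(y). -/
open Real MeasureTheory Set

lemma integrable_aux (x : ℝ) (hx : 0 < x) :
    IntegrableOn (fun t : ℝ => t⁻¹ * Real.exp ((1 - t) / x)) (Set.Ioi 1) := by
  have hg : IntegrableOn (fun t : ℝ => Real.exp (1/x) * Real.exp (-(1/x) * t)) (Set.Ioi 1) :=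
    (exp_neg_integrableOn_Ioi 1 (by positivity)).const_mul _
  refine MeasureTheory.Integrable.mono hg ?_ ?_
  · apply Measurable.aestronglyMeasurable
    fun_prop
  · filter_upwards [ae_restrict_mem measurableSet_Ioi] with t ht
    have ht1 : (1:ℝ) < t := ht
    have ht0 : 0 < t := lt_trans one_pos ht1
    rw [Real.norm_eq_abs, Real.norm_eq_abs, abs_of_nonneg (by positivity), abs_of_nonneg (by positivity)]
    have h1 : t⁻¹ ≤ 1 := by
      rw [inv_le_one_iff₀]; right; exact le_of_lt ht1
    have h2 : Real.exp ((1 - t) / x) = Real.exp (1/x) * Real.exp (-(1/x) * t) := by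
      rw [← Real.exp_add]; ring_nf
    calc t⁻¹ * Real.exp ((1 - t) / x) ≤ 1 * Real.exp ((1 - t) / x) := by
            apply mul_le_mul_of_nonneg_right h1 (le_of_lt (Real.exp_pos _))
      _ = Real.exp (1/x) * Real.exp (-(1/x) * t) := by rw [one_mul, h2]

lemma C1_eq (x : ℝ) (hx : 0 < x) :
    C1 x = (1 / Real.log 2) * ∫ t in Set.Ioi (1:ℝ), t⁻¹ * Real.exp ((1 - t) / x) := by
  unfold C1
  rw [mul_assoc, ← MeasureTheory.integral_const_mul]
  congr 1
  apply MeasureTheory.setIntegral_congr_fun measurableSet_Ioi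
  intro t ht
  simp only
  rw [← mul_assoc, mul_comm (Real.exp (1/x)) t⁻¹, mul_assoc, ← Real.exp_add]
  congr 1
  field_simp
  ring

theorem stmt2 : ∀ x y : ℝ, 0 < x → x < y → C1 x < C1 y := by
  intro x y hx hxy
  have hy : 0 < y := lt_trans hx hxy
  rw [C1_eq x hx, C1_eq y hy]
  have hlog : 0 < 1 / Real.log 2 := by positivity
  apply mul_lt_mul_of_pos_left _ hlog
  have hfx := integrable_aux x hx
  have hfy := integrable_aux y hy
  rw [← sub_pos, ← MeasureTheory.integral_sub hfy hfx]
  have hpos : ∀ t ∈ Set.Ioi (1:ℝ),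
      0 < t⁻¹ * Real.exp ((1 - t) / y) - t⁻¹ * Real.exp ((1 - t) / x) := by
    intro t ht
    have ht1 : (1:ℝ) < t := ht
    have ht0 : 0 < t := lt_trans one_pos ht1
    have h1t : 1 - t < 0 := by linarith
    have : (1 - t) / x < (1 - t) / y := by
      rw [div_lt_div_iff₀ hx hy]
      nlinarith
    have := Real.exp_lt_exp.2 this
    have hinv : 0 < t⁻¹ := by positivity
    nlinarith [Real.exp_pos ((1 - t)/x)]
  set f := fun t : ℝ => t⁻¹ * Real.exp ((1 - t) / y) - t⁻¹ * Real.exp ((1 - t) / x) with hf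
  have hint : IntegrableOn f (Set.Ioi 1) := hfy.sub hfx
  rw [MeasureTheory.setIntegral_pos_iff_support_of_nonneg_ae]
  · have hsub : Set.Ioi (1:ℝ) ⊆ Function.support f := fun t ht => ne_of_gt (hpos t ht)
    have : Function.support f ∩ Set.Ioi 1 = Set.Ioi 1 := by
      apply Set.inter_eq_self_of_subset_right hsub
    rw [this, Real.volume_Ioi]
    exact ENNReal.zero_lt_top
  · rw [Filter.EventuallyLE, ae_restrict_iff' measurableSet_Ioi]
    exact Filter.Eventually.of_forall (fun t ht => le_of_lt (hpos t ht))
  · exact hint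
end

section
/- Let L₁, L₂, σ² > 0 and γ₁, γ₂ ∈ (0,1) with γ₁ + γ₂ = 1. Then ∫_0^∞ ∫_0^∞ (1/4) e^{-x₁/2} e^{-x₂/2} [ max{ log₂(1 + γ₁L₁x₁/(γ₂L₁x₁ + 2σ²)), log₂(1 + γ₁L₂x₂/(γ₂L₂x₂ + 2σ²)) } + log₂(1 + γ₂L₂x₂/(2σ²)) ] dx₁ dx₂ = C₁(L₁/σ²) − C₁(γ₂L₁/σ²) + C₁(L₂/σ²) − C₁(L₁L₂/((L₁+L₂)σ²)) + C₁(γ₂L₁L₂/((L₁+L₂)σ²)). (This is the closed-form ergodic sum capacity of two-user bi-directional cooperative NOMA under the nearby-users approximation.) -/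
open Real MeasureTheory Set

open Filter Topology

lemma int_exp (a : ℝ) (ha : 0 < a) (c : ℝ) :
    ∫ x in Ioi c, Real.exp (-(a * x)) = Real.exp (-(a * c)) / a := by
  have h := integral_comp_mul_left_Ioi (fun y => Real.exp (-y)) c ha
  simp only [smul_eq_mul] at h
  rw [h, integral_exp_neg_Ioi]
  ring

lemma intOn_exp (a : ℝ) (ha : 0 < a) (c : ℝ) :
    IntegrableOn (fun x => Real.exp (-(a * x))) (Ioi c) := by
  simpa [neg_mul] using exp_neg_integrableOn_Ioi c ha

lemma intOn_x_exp (a : ℝ) (ha : 0 < a) :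
    IntegrableOn (fun x => x * Real.exp (-(a * x))) (Ioi 0) := by
  have h := integrableOn_rpow_mul_exp_neg_mul_rpow (s := 1) (p := 1)
    (by norm_num) one_pos ha
  refine h.congr_fun (fun x hx => ?_) measurableSet_Ioi
  dsimp only; rw [Real.rpow_one, neg_mul]

lemma meas_logb (c : ℝ) : Measurable (fun x : ℝ => Real.logb 2 (1 + c * x)) := by
  have : Measurable fun x : ℝ => Real.log (1 + c * x) :=
    Real.measurable_log.comp (measurable_const.add (measurable_id.const_mul c))
  exact this.div_const _

lemma intOn_exp_log (a c : ℝ) (ha : 0 < a) (hc : 0 ≤ c) :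
    IntegrableOn (fun x => Real.exp (-(a * x)) * Real.log (1 + c * x)) (Ioi 0) := by
  refine Integrable.mono' ((intOn_x_exp a ha).const_mul c) ?_ ?_
  · exact (((measurable_id.const_mul a).neg.exp).mul
      (Real.measurable_log.comp (measurable_const.add (measurable_id.const_mul c)))).aestronglyMeasurable
  · filter_upwards [ae_restrict_mem measurableSet_Ioi] with x hx
    have hx0 : (0:ℝ) < x := hx
    have h1 : (0:ℝ) < 1 + c * x := by nlinarith
    have hl0 : 0 ≤ Real.log (1 + c * x) := Real.log_nonneg (by nlinarith)
    have hl : Real.log (1 + c * x) ≤ c * x := by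
      have := Real.log_le_sub_one_of_pos h1; linarith
    rw [Real.norm_eq_abs, abs_of_nonneg (by positivity)]
    calc Real.exp (-(a*x)) * Real.log (1 + c*x) ≤ Real.exp (-(a*x)) * (c*x) := by
          exact mul_le_mul_of_nonneg_left hl (Real.exp_pos _).le
      _ = c * (x * Real.exp (-(a*x))) := by ring

lemma intOn_exp_logb (a c : ℝ) (ha : 0 < a) (hc : 0 ≤ c) :
    IntegrableOn (fun x => Real.exp (-(a * x)) * Real.logb 2 (1 + c * x)) (Ioi 0) := by
  have h : IntegrableOn (fun x => Real.exp (-(a*x)) * Real.log (1 + c*x) / Real.log 2) (Ioi 0) :=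
    (intOn_exp_log a c ha hc).div_const (Real.log 2)
  refine h.congr_fun (fun x _ => ?_) measurableSet_Ioi
  dsimp only; rw [mul_div_assoc, Real.log_div_log]

lemma shift_int (G : ℝ → ℝ) : ∫ y in Ioi (0:ℝ), G (y + 1) = ∫ t in Ioi (1:ℝ), G t := by
  rw [← integral_indicator measurableSet_Ioi, ← integral_indicator measurableSet_Ioi]
  have h : ∀ y : ℝ, (Ioi (0:ℝ)).indicator (fun y => G (y + 1)) y
      = (Ioi (1:ℝ)).indicator G (y + 1) := by
    intro y
    by_cases hy : y ∈ Ioi (0:ℝ)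
    · rw [indicator_of_mem hy, indicator_of_mem (by simpa using hy)]
    · rw [indicator_of_notMem hy, indicator_of_notMem (by simpa using hy)]
  simp_rw [h]
  exact integral_add_right_eq_self (fun y => (Ioi (1:ℝ)).indicator G y) 1

lemma subst_int (a c : ℝ) (ha : 0 < a) (hc : 0 < c) :
    ∫ x in Ioi (0:ℝ), Real.exp (-(a * x)) * (c / (1 + c * x))
      = Real.exp (a / c) * ∫ t in Ioi (1:ℝ), t⁻¹ * Real.exp (-(a / c * t)) := by
  set G : ℝ → ℝ := fun t => t⁻¹ * Real.exp (-(a / c * t)) with hG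
  have h1 : ∀ x ∈ Ioi (0:ℝ), Real.exp (-(a*x)) * (c / (1 + c*x))
      = (c * Real.exp (a / c)) * G (1 + c*x) := by
    intro x hx
    have hx0 : (0:ℝ) < x := hx
    have hden : (0:ℝ) < 1 + c * x := by nlinarith
    rw [hG]
    simp only
    have hcancel : Real.exp (a / c) * Real.exp (-(a / c)) = 1 := by
      rw [← Real.exp_add]; simp
    rw [show -(a/c*(1+c*x)) = -(a/c) + -(a*x) by field_simp; ring, Real.exp_add,
      div_eq_mul_inv]
    linear_combination (-(Real.exp (-(a*x)) * (c * (1+c*x)⁻¹))) * hcancel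
  rw [setIntegral_congr_fun measurableSet_Ioi h1, integral_const_mul]
  have h3 := integral_comp_mul_left_Ioi (fun y => G (1 + y)) 0 hc
  simp only [mul_zero, smul_eq_mul] at h3
  have h4 : ∫ y in Ioi (0:ℝ), G (1 + y) = ∫ t in Ioi (1:ℝ), G t := by
    simp_rw [add_comm (1:ℝ)]
    exact shift_int G
  rw [h3, h4]
  field_simp

lemma parts_int (a c : ℝ) (ha : 0 < a) (hc : 0 < c) :
    ∫ x in Ioi (0:ℝ), a * Real.exp (-(a * x)) * Real.log (1 + c * x)
      = ∫ x in Ioi (0:ℝ), Real.exp (-(a * x)) * (c / (1 + c * x)) := by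
  have hint1 : IntegrableOn (fun x => a * (Real.exp (-(a*x)) * Real.log (1 + c*x))) (Ioi 0) :=
    (intOn_exp_log a c ha hc.le).const_mul a
  have hint2 : IntegrableOn (fun x => Real.exp (-(a*x)) * (c / (1 + c*x))) (Ioi 0) := by
    refine Integrable.mono' ((intOn_exp a ha 0).const_mul c) ?_ ?_
    · refine Measurable.aestronglyMeasurable ?_
      exact ((measurable_id.const_mul a).neg.exp).mul
        (measurable_const.div (measurable_const.add (measurable_id.const_mul c)))
    · filter_upwards [ae_restrict_mem measurableSet_Ioi] with x hx
      have hx0 : (0:ℝ) < x := hx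
      have hden : (1:ℝ) ≤ 1 + c * x := by nlinarith
      have hq : c / (1 + c * x) ≤ c := by
        rw [div_le_iff₀ (by linarith)]; nlinarith
      have hq0 : 0 ≤ c / (1 + c * x) := by positivity
      rw [Real.norm_eq_abs, abs_of_nonneg (by positivity)]
      calc Real.exp (-(a*x)) * (c / (1+c*x)) ≤ Real.exp (-(a*x)) * c :=
            mul_le_mul_of_nonneg_left hq (Real.exp_pos _).le
        _ = c * Real.exp (-(a*x)) := by ring
  have hderiv : ∀ x ∈ Ici (0:ℝ),
      HasDerivAt (fun x => -(Real.exp (-(a*x)) * Real.log (1 + c*x)))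
        (a * (Real.exp (-(a*x)) * Real.log (1 + c*x)) - Real.exp (-(a*x)) * (c / (1 + c*x))) x := by
    intro x hx
    have hden : (0:ℝ) < 1 + c * x := by
      have : (0:ℝ) ≤ x := hx
      nlinarith
    have h1 : HasDerivAt (fun x : ℝ => -(a*x)) (-a) x := by
      simpa [Pi.neg_def] using ((hasDerivAt_id x).const_mul a).neg
    have h2 := h1.exp
    have h3 : HasDerivAt (fun x : ℝ => 1 + c * x) c x := by
      simpa using ((hasDerivAt_id x).const_mul c).const_add 1
    have h4 := h3.log hden.ne'
    have h5 := (h2.mul h4).neg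
    convert (show HasDerivAt (fun x => -(Real.exp (-(a*x)) * Real.log (1 + c*x))) _ x from h5) using 1
    field_simp
    ring
  have htend : Tendsto (fun x => -(Real.exp (-(a*x)) * Real.log (1 + c*x))) atTop (𝓝 0) := by
    apply squeeze_zero_norm' (a := fun x => c * (x * Real.exp (-(a*x))))
    · filter_upwards [eventually_ge_atTop (0:ℝ)] with x hx
      have hden : (0:ℝ) < 1 + c * x := by nlinarith
      have hl0 : 0 ≤ Real.log (1 + c * x) := Real.log_nonneg (by nlinarith)
      have hl : Real.log (1 + c * x) ≤ c * x := by
        have := Real.log_le_sub_one_of_pos hden; linarith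
      rw [norm_neg, Real.norm_eq_abs, abs_of_nonneg (by positivity)]
      calc Real.exp (-(a*x)) * Real.log (1 + c*x) ≤ Real.exp (-(a*x)) * (c*x) :=
            mul_le_mul_of_nonneg_left hl (Real.exp_pos _).le
        _ = c * (x * Real.exp (-(a*x))) := by ring
    · have h := tendsto_rpow_mul_exp_neg_mul_atTop_nhds_zero 1 a ha
      have h2 : Tendsto (fun x : ℝ => x * Real.exp (-(a*x))) atTop (𝓝 0) := by
        apply h.congr'
        filter_upwards [eventually_ge_atTop (0:ℝ)] with x hx
        rw [Real.rpow_one, neg_mul]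
      simpa using h2.const_mul c
  have key := integral_Ioi_of_hasDerivAt_of_tendsto'
    (f' := fun x => a * (Real.exp (-(a*x)) * Real.log (1 + c*x)) - Real.exp (-(a*x)) * (c / (1 + c*x)))
    hderiv (hint1.sub hint2) htend
  simp only [mul_zero, neg_zero, Real.exp_zero, add_zero, Real.log_one, one_mul, zero_sub, neg_neg,
    mul_one, sub_zero] at key
  have hsplit := integral_sub hint1 hint2
  rw [key] at hsplit
  have : ∫ x in Ioi (0:ℝ), a * (Real.exp (-(a*x)) * Real.log (1 + c*x))
      = ∫ x in Ioi (0:ℝ), Real.exp (-(a*x)) * (c / (1 + c*x)) := by linarith [hsplit]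
  rw [← this]
  congr 1
  ext x
  ring

lemma KL (a c : ℝ) (ha : 0 < a) (hc : 0 < c) :
    ∫ x in Ioi (0:ℝ), a * Real.exp (-(a * x)) * Real.logb 2 (1 + c * x) = C1 (c / a) := by
  have hfun : (fun x => a * Real.exp (-(a*x)) * Real.logb 2 (1 + c*x))
      = fun x => (Real.log 2)⁻¹ * (a * (Real.exp (-(a*x)) * Real.log (1 + c*x))) := by
    funext x
    rw [Real.logb]
    ring
  rw [hfun, integral_const_mul]
  simp_rw [← mul_assoc]
  rw [parts_int a c ha hc, subst_int a c ha hc]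
  have harg : (fun t : ℝ => t⁻¹ * Real.exp (-t / (c / a)))
      = fun t : ℝ => t⁻¹ * Real.exp (-(a / c * t)) := by
    funext t
    congr 1
    rw [div_div_eq_mul_div]
    ring
  rw [C1, harg, show (1 / (c / a)) = a / c by rw [one_div_div]]
  ring

lemma KL' (a c : ℝ) (ha : 0 < a) (hc : 0 < c) :
    ∫ x in Ioi (0:ℝ), Real.exp (-(a * x)) * Real.logb 2 (1 + c * x) = C1 (c / a) / a := by
  have h := KL a c ha hc
  have hfun : (fun x => a * Real.exp (-(a*x)) * Real.logb 2 (1 + c*x))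
      = fun x => a * (Real.exp (-(a*x)) * Real.logb 2 (1 + c*x)) := by
    funext x; ring
  rw [hfun, integral_const_mul] at h
  rw [eq_div_iff ha.ne', mul_comm]
  linarith [h]

lemma expHalf (x : ℝ) : Real.exp (-x/2) = Real.exp (-(((1:ℝ)/2) * x)) := by
  congr 1; ring

lemma intOn_expHalf (c : ℝ) : IntegrableOn (fun x : ℝ => Real.exp (-x/2)) (Ioi c) :=
  (intOn_exp (1/2) (by norm_num) c).congr_fun (fun x _ => (expHalf x).symm) measurableSet_Ioi

lemma int_expHalf (c : ℝ) : ∫ x in Ioi c, Real.exp (-x/2) = 2 * Real.exp (-c/2) := by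
  simp_rw [expHalf]
  rw [int_exp (1/2) (by norm_num) c]
  ring

lemma intOn_exp_logb_half (c : ℝ) (hc : 0 ≤ c) :
    IntegrableOn (fun x : ℝ => Real.exp (-x/2) * Real.logb 2 (1 + c * x)) (Ioi 0) :=
  (intOn_exp_logb (1/2) c (by norm_num) hc).congr_fun
    (fun x _ => by dsimp only; rw [← expHalf]) measurableSet_Ioi

lemma logb2_nonneg {y : ℝ} (hy : 1 ≤ y) : 0 ≤ Real.logb 2 y := Real.logb_nonneg (by norm_num) hy

lemma logb2_le_logb2 {x y : ℝ} (hx : 1 ≤ x) (hxy : x ≤ y) :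
    Real.logb 2 x ≤ Real.logb 2 y := by
  exact Real.logb_le_logb_of_le (by norm_num) (by linarith) hxy

noncomputable def G1f (b L1 L2 x1 x2 : ℝ) : ℝ :=
  if L2*x2 ≤ L1*x1 then (1/4) * Real.exp (-x1/2) * Real.exp (-x2/2) * Real.logb 2 (1 + b*L2*x2)
  else 0

noncomputable def G2f (b L1 L2 x1 x2 : ℝ) : ℝ :=
  if L2*x2 ≤ L1*x1 then 0
  else (1/4) * Real.exp (-x1/2) * Real.exp (-x2/2) * Real.logb 2 (1 + b*L1*x1)

lemma G_split (b L1 L2 x1 x2 : ℝ) :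
    (1/4) * Real.exp (-x1/2) * Real.exp (-x2/2) * Real.logb 2 (1 + b * min (L1*x1) (L2*x2))
      = G1f b L1 L2 x1 x2 + G2f b L1 L2 x1 x2 := by
  by_cases h : L2*x2 ≤ L1*x1
  · rw [G1f, G2f, if_pos h, if_pos h, add_zero, min_eq_right h, ← mul_assoc]
  · rw [G1f, G2f, if_neg h, if_neg h, zero_add, min_eq_left (le_of_not_ge h), ← mul_assoc]

lemma G1_inner_int (b L1 L2 : ℝ) (hb : 0 < b) (h2 : 0 < L2) (x1 : ℝ) :
    IntegrableOn (fun x2 => G1f b L1 L2 x1 x2) (Ioi 0) := by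
  refine Integrable.mono' ((intOn_exp_logb_half (b*L2) (by positivity)).const_mul
    ((1/4) * Real.exp (-x1/2))) ?_ ?_
  · refine Measurable.aestronglyMeasurable (Measurable.ite
      (measurableSet_le (measurable_id.const_mul L2) measurable_const) ?_ measurable_const)
    exact (measurable_const.mul ((measurable_id.neg.div_const 2).exp)).mul
      ((Real.measurable_log.comp (measurable_const.add (measurable_id.const_mul (b*L2)))).div_const _)
  · filter_upwards [ae_restrict_mem measurableSet_Ioi] with x2 hx2
    have hx2' : (0:ℝ) < x2 := hx2
    have hlb : 0 ≤ Real.logb 2 (1 + b*L2*x2) := logb2_nonneg (by nlinarith [mul_pos (mul_pos hb h2) hx2'])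
    have hnn : (0:ℝ) ≤ (1/4) * Real.exp (-x1/2) * (Real.exp (-x2/2) * Real.logb 2 (1 + b*L2*x2)) :=
      mul_nonneg (by positivity) (mul_nonneg (Real.exp_pos _).le hlb)
    rw [G1f]
    by_cases h : L2*x2 ≤ L1*x1
    · rw [if_pos h, Real.norm_eq_abs, abs_of_nonneg
        (mul_nonneg (by positivity) hlb)]
      exact le_of_eq (by ring)
    · rw [if_neg h, norm_zero]
      exact hnn

lemma G2_inner_int (b L1 L2 : ℝ) (x1 : ℝ) :
    IntegrableOn (fun x2 => G2f b L1 L2 x1 x2) (Ioi 0) := by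
  refine Integrable.mono' ((intOn_expHalf 0).const_mul
    ((1/4) * Real.exp (-x1/2) * |Real.logb 2 (1 + b*L1*x1)|)) ?_ ?_
  · refine Measurable.aestronglyMeasurable (Measurable.ite
      (measurableSet_le (measurable_id.const_mul L2) measurable_const) measurable_const ?_)
    exact (measurable_const.mul ((measurable_id.neg.div_const 2).exp)).mul measurable_const
  · filter_upwards [ae_restrict_mem measurableSet_Ioi] with x2 hx2
    rw [G2f]
    by_cases h : L2*x2 ≤ L1*x1
    · rw [if_pos h, norm_zero]
      positivity
    · rw [if_neg h, Real.norm_eq_abs, abs_mul]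
      have : |(1:ℝ)/4 * Real.exp (-x1/2) * Real.exp (-x2/2)|
          = (1/4) * Real.exp (-x1/2) * Real.exp (-x2/2) := abs_of_nonneg (by positivity)
      rw [this]
      have h4 : (0:ℝ) < Real.exp (-x2/2) := Real.exp_pos _
      nlinarith [abs_nonneg (Real.logb 2 (1 + b*L1*x1)), Real.exp_pos (-x1/2)]

lemma prod_ae_mem {s t : Set ℝ} (hs : MeasurableSet s) (ht : MeasurableSet t) :
    ∀ᵐ p : ℝ × ℝ ∂((volume.restrict s).prod (volume.restrict t)), p ∈ s ×ˢ t := by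
  rw [Measure.prod_restrict]
  exact ae_restrict_mem (hs.prod ht)

lemma G1_prod_int (b L1 L2 : ℝ) (hb : 0 < b) (h2 : 0 < L2) :
    Integrable (fun p : ℝ × ℝ => G1f b L1 L2 p.1 p.2)
      ((volume.restrict (Ioi 0)).prod (volume.restrict (Ioi 0))) := by
  have hdom : Integrable (fun p : ℝ × ℝ => Real.exp (-p.1/2) *
      (Real.exp (-p.2/2) * Real.logb 2 (1 + b*L2*p.2)))
      ((volume.restrict (Ioi 0)).prod (volume.restrict (Ioi 0))) :=
    Integrable.mul_prod (intOn_expHalf 0) (intOn_exp_logb_half (b*L2) (by positivity))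
  refine hdom.mono' ?_ ?_
  · refine Measurable.aestronglyMeasurable (Measurable.ite
      (measurableSet_le (measurable_snd.const_mul L2) (measurable_fst.const_mul L1)) ?_
      measurable_const)
    exact ((measurable_const.mul ((measurable_fst.neg.div_const 2).exp)).mul
      ((measurable_snd.neg.div_const 2).exp)).mul
      ((Real.measurable_log.comp (measurable_const.add (measurable_snd.const_mul (b*L2)))).div_const _)
  · filter_upwards [prod_ae_mem measurableSet_Ioi measurableSet_Ioi] with p hp
    obtain ⟨hp1, hp2⟩ := hp
    have hx1 : (0:ℝ) < p.1 := hp1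
    have hx2 : (0:ℝ) < p.2 := hp2
    have hlb : 0 ≤ Real.logb 2 (1 + b*L2*p.2) :=
      logb2_nonneg (by nlinarith [mul_pos (mul_pos hb h2) hx2])
    rw [G1f]
    by_cases h : L2*p.2 ≤ L1*p.1
    · rw [if_pos h, Real.norm_eq_abs, abs_of_nonneg (mul_nonneg (by positivity) hlb)]
      have he1 : Real.exp (-p.1/2) ≤ Real.exp (-p.1/2) := le_rfl
      have : (1:ℝ)/4 * Real.exp (-p.1/2) * Real.exp (-p.2/2) * Real.logb 2 (1 + b*L2*p.2)
          ≤ 1 * Real.exp (-p.1/2) * Real.exp (-p.2/2) * Real.logb 2 (1 + b*L2*p.2) := by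
        have := Real.exp_pos (-p.1/2)
        have := Real.exp_pos (-p.2/2)
        nlinarith [mul_nonneg (mul_nonneg (Real.exp_pos (-p.1/2)).le (Real.exp_pos (-p.2/2)).le) hlb]
      calc (1:ℝ)/4 * Real.exp (-p.1/2) * Real.exp (-p.2/2) * Real.logb 2 (1 + b*L2*p.2)
          ≤ 1 * Real.exp (-p.1/2) * Real.exp (-p.2/2) * Real.logb 2 (1 + b*L2*p.2) := this
        _ = Real.exp (-p.1/2) * (Real.exp (-p.2/2) * Real.logb 2 (1 + b*L2*p.2)) := by ring
    · rw [if_neg h, norm_zero]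
      exact mul_nonneg (Real.exp_pos _).le (mul_nonneg (Real.exp_pos _).le hlb)

lemma G2_prod_int (b L1 L2 : ℝ) (hb : 0 < b) (h1 : 0 < L1) :
    Integrable (fun p : ℝ × ℝ => G2f b L1 L2 p.1 p.2)
      ((volume.restrict (Ioi 0)).prod (volume.restrict (Ioi 0))) := by
  have hdom : Integrable (fun p : ℝ × ℝ =>
      (Real.exp (-p.1/2) * Real.logb 2 (1 + b*L1*p.1)) * Real.exp (-p.2/2))
      ((volume.restrict (Ioi 0)).prod (volume.restrict (Ioi 0))) :=
    Integrable.mul_prod (intOn_exp_logb_half (b*L1) (by positivity)) (intOn_expHalf 0)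
  refine hdom.mono' ?_ ?_
  · refine Measurable.aestronglyMeasurable (Measurable.ite
      (measurableSet_le (measurable_snd.const_mul L2) (measurable_fst.const_mul L1))
      measurable_const ?_)
    exact ((measurable_const.mul ((measurable_fst.neg.div_const 2).exp)).mul
      ((measurable_snd.neg.div_const 2).exp)).mul
      ((Real.measurable_log.comp (measurable_const.add (measurable_fst.const_mul (b*L1)))).div_const _)
  · filter_upwards [prod_ae_mem measurableSet_Ioi measurableSet_Ioi] with p hp
    obtain ⟨hp1, hp2⟩ := hp
    have hx1 : (0:ℝ) < p.1 := hp1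
    have hx2 : (0:ℝ) < p.2 := hp2
    have hlb : 0 ≤ Real.logb 2 (1 + b*L1*p.1) :=
      logb2_nonneg (by nlinarith [mul_pos (mul_pos hb h1) hx1])
    rw [G2f]
    by_cases h : L2*p.2 ≤ L1*p.1
    · rw [if_pos h, norm_zero]
      exact mul_nonneg (mul_nonneg (Real.exp_pos _).le hlb) (Real.exp_pos _).le
    · rw [if_neg h, Real.norm_eq_abs, abs_of_nonneg (by
        exact mul_nonneg (by positivity) hlb)]
      have := Real.exp_pos (-p.1/2)
      have := Real.exp_pos (-p.2/2)
      nlinarith [mul_nonneg (mul_nonneg (Real.exp_pos (-p.1/2)).le (Real.exp_pos (-p.2/2)).le) hlb]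

lemma G2_inner_val (b L1 L2 : ℝ) (hb : 0 < b) (h1 : 0 < L1) (h2 : 0 < L2)
    (x1 : ℝ) (hx1 : 0 < x1) :
    ∫ x2 in Ioi (0:ℝ), G2f b L1 L2 x1 x2
      = (1/2) * Real.exp (-(((L1+L2)/(2*L2)) * x1)) * Real.logb 2 (1 + b*L1*x1) := by
  have hr : (0:ℝ) < L1*x1/L2 := by positivity
  have e2 : (fun x2 => G2f b L1 L2 x1 x2) = (Ioi (L1*x1/L2)).indicator
      (fun x2 => ((1/4) * Real.exp (-x1/2) * Real.logb 2 (1 + b*L1*x1)) * Real.exp (-x2/2)) := by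
    funext x2
    rw [G2f]
    by_cases h : L2*x2 ≤ L1*x1
    · rw [if_pos h, indicator_of_notMem]
      simp only [mem_Ioi, not_lt]
      rw [le_div_iff₀ h2]
      linarith [mul_comm x2 L2]
    · rw [if_neg h, indicator_of_mem]
      · ring
      · simp only [mem_Ioi]
        rw [div_lt_iff₀ h2]
        have := not_le.mp h
        linarith [mul_comm x2 L2]
  rw [e2, setIntegral_indicator measurableSet_Ioi,
    Set.inter_eq_self_of_subset_right (Ioi_subset_Ioi hr.le),
    integral_const_mul, int_expHalf]
  have hexp : Real.exp (-x1/2) * Real.exp (-(L1*x1/L2)/2)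
      = Real.exp (-(((L1+L2)/(2*L2)) * x1)) := by
    rw [← Real.exp_add]
    congr 1
    field_simp
    ring
  rw [← hexp]
  ring

lemma G1_inner_val (b L1 L2 : ℝ) (hb : 0 < b) (h1 : 0 < L1) (h2 : 0 < L2)
    (x2 : ℝ) (hx2 : 0 < x2) :
    ∫ x1 in Ioi (0:ℝ), G1f b L1 L2 x1 x2
      = (1/2) * Real.exp (-(((L1+L2)/(2*L1)) * x2)) * Real.logb 2 (1 + b*L2*x2) := by
  have hr : (0:ℝ) < L2*x2/L1 := by positivity
  have e1 : (fun x1 => G1f b L1 L2 x1 x2) = (Ici (L2*x2/L1)).indicator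
      (fun x1 => ((1/4) * Real.exp (-x2/2) * Real.logb 2 (1 + b*L2*x2)) * Real.exp (-x1/2)) := by
    funext x1
    rw [G1f]
    by_cases h : L2*x2 ≤ L1*x1
    · rw [if_pos h, indicator_of_mem]
      · ring
      · simp only [mem_Ici]
        rw [div_le_iff₀ h1]
        linarith [mul_comm x1 L1]
    · rw [if_neg h, indicator_of_notMem]
      simp only [mem_Ici, not_le]
      rw [lt_div_iff₀ h1]
      have := not_le.mp h
      linarith [mul_comm x1 L1]
  have hsub : Ici (L2*x2/L1) ⊆ Ioi (0:ℝ) := fun x hx => lt_of_lt_of_le hr hx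
  rw [e1, setIntegral_indicator measurableSet_Ici,
    Set.inter_eq_self_of_subset_right hsub,
    integral_Ici_eq_integral_Ioi, integral_const_mul, int_expHalf]
  have hexp : Real.exp (-x2/2) * Real.exp (-(L2*x2/L1)/2)
      = Real.exp (-(((L1+L2)/(2*L1)) * x2)) := by
    rw [← Real.exp_add]
    congr 1
    field_simp
    ring
  rw [← hexp]
  ring

lemma KM (b L1 L2 : ℝ) (hb : 0 < b) (h1 : 0 < L1) (h2 : 0 < L2) :
    (∫ x1 in Ioi (0:ℝ), ∫ x2 in Ioi (0:ℝ),
      (1/4) * Real.exp (-x1/2) * Real.exp (-x2/2) * Real.logb 2 (1 + b * min (L1*x1) (L2*x2)))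
      = C1 (2*b*L1*L2/(L1+L2)) := by
  have hL12 : (0:ℝ) < L1 + L2 := by linarith
  have hsplit : ∀ x1 ∈ Ioi (0:ℝ),
      (∫ x2 in Ioi (0:ℝ), (1/4) * Real.exp (-x1/2) * Real.exp (-x2/2) *
        Real.logb 2 (1 + b * min (L1*x1) (L2*x2)))
      = (∫ x2 in Ioi (0:ℝ), G1f b L1 L2 x1 x2) + ∫ x2 in Ioi (0:ℝ), G2f b L1 L2 x1 x2 := by
    intro x1 _
    rw [← integral_add (G1_inner_int b L1 L2 hb h2 x1) (G2_inner_int b L1 L2 x1)]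
    exact setIntegral_congr_fun measurableSet_Ioi (fun x2 _ => G_split b L1 L2 x1 x2)
  rw [setIntegral_congr_fun measurableSet_Ioi hsplit]
  have hout1 : Integrable (fun x1 => ∫ x2 in Ioi (0:ℝ), G1f b L1 L2 x1 x2)
      (volume.restrict (Ioi 0)) := (G1_prod_int b L1 L2 hb h2).integral_prod_left
  have hout2 : Integrable (fun x1 => ∫ x2 in Ioi (0:ℝ), G2f b L1 L2 x1 x2)
      (volume.restrict (Ioi 0)) := (G2_prod_int b L1 L2 hb h1).integral_prod_left
  rw [integral_add hout1 hout2]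
  have hswap : (∫ x1 in Ioi (0:ℝ), ∫ x2 in Ioi (0:ℝ), G1f b L1 L2 x1 x2)
      = ∫ x2 in Ioi (0:ℝ), ∫ x1 in Ioi (0:ℝ), G1f b L1 L2 x1 x2 :=
    integral_integral_swap (G1_prod_int b L1 L2 hb h2)
  have hT1 : (∫ x2 in Ioi (0:ℝ), ∫ x1 in Ioi (0:ℝ), G1f b L1 L2 x1 x2)
      = (L1/(L1+L2)) * C1 (2*b*L1*L2/(L1+L2)) := by
    rw [setIntegral_congr_fun measurableSet_Ioi
      (fun x2 hx2 => G1_inner_val b L1 L2 hb h1 h2 x2 hx2)]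
    have hfun : (fun x2 => (1/2) * Real.exp (-(((L1+L2)/(2*L1)) * x2)) *
        Real.logb 2 (1 + b*L2*x2))
        = fun x2 => (1/2) * (Real.exp (-(((L1+L2)/(2*L1)) * x2)) *
        Real.logb 2 (1 + (b*L2)*x2)) := by
      funext x
      ring_nf
    rw [hfun, integral_const_mul, KL' ((L1+L2)/(2*L1)) (b*L2) (by positivity) (by positivity)]
    rw [show b*L2/((L1+L2)/(2*L1)) = 2*b*L1*L2/(L1+L2) by field_simp]
    field_simp
  have hT2 : (∫ x1 in Ioi (0:ℝ), ∫ x2 in Ioi (0:ℝ), G2f b L1 L2 x1 x2)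
      = (L2/(L1+L2)) * C1 (2*b*L1*L2/(L1+L2)) := by
    rw [setIntegral_congr_fun measurableSet_Ioi
      (fun x1 hx1 => G2_inner_val b L1 L2 hb h1 h2 x1 hx1)]
    have hfun : (fun x1 => (1/2) * Real.exp (-(((L1+L2)/(2*L2)) * x1)) *
        Real.logb 2 (1 + b*L1*x1))
        = fun x1 => (1/2) * (Real.exp (-(((L1+L2)/(2*L2)) * x1)) *
        Real.logb 2 (1 + (b*L1)*x1)) := by
      funext x
      ring_nf
    rw [hfun, integral_const_mul, KL' ((L1+L2)/(2*L2)) (b*L1) (by positivity) (by positivity)]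
    rw [show b*L1/((L1+L2)/(2*L2)) = 2*b*L1*L2/(L1+L2) by field_simp]
    field_simp
  rw [hswap, hT1, hT2]
  field_simp

lemma quot_logb (σ2 γ1 γ2 u : ℝ) (hσ : 0 < σ2) (hγ2a : 0 < γ2) (hγ2b : γ2 < 1)
    (hsum : γ1 + γ2 = 1) (hu : 0 ≤ u) :
    Real.logb 2 (1 + γ1 * u / (γ2 * u + 2 * σ2))
      = Real.logb 2 (1 + u / (2 * σ2)) - Real.logb 2 (1 + γ2 * u / (2 * σ2)) := by
  have hd : (0:ℝ) < γ2 * u + 2 * σ2 := by nlinarith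
  have hA : (0:ℝ) < 1 + u / (2 * σ2) := by positivity
  have hB : (0:ℝ) < 1 + γ2 * u / (2 * σ2) := by positivity
  rw [← Real.logb_div (ne_of_gt hA) (ne_of_gt hB)]
  congr 1
  have hγ1 : γ1 = 1 - γ2 := by linarith
  rw [hγ1]
  field_simp
  ring

lemma mono_logb (σ2 γ2 u v : ℝ) (hσ : 0 < σ2) (hγ2a : 0 < γ2) (hγ2b : γ2 < 1)
    (hu : 0 ≤ u) (huv : u ≤ v) :
    Real.logb 2 (1 + u / (2 * σ2)) - Real.logb 2 (1 + γ2 * u / (2 * σ2))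
      ≤ Real.logb 2 (1 + v / (2 * σ2)) - Real.logb 2 (1 + γ2 * v / (2 * σ2)) := by
  have hv : (0:ℝ) ≤ v := le_trans hu huv
  have hA : (0:ℝ) < 1 + u / (2 * σ2) := by positivity
  have hB : (0:ℝ) < 1 + γ2 * u / (2 * σ2) := by positivity
  have hC : (0:ℝ) < 1 + v / (2 * σ2) := by positivity
  have hD : (0:ℝ) < 1 + γ2 * v / (2 * σ2) := by positivity
  rw [sub_le_sub_iff]
  rw [← Real.logb_mul (ne_of_gt hA) (ne_of_gt hD), ← Real.logb_mul (ne_of_gt hC) (ne_of_gt hB)]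
  apply Real.logb_le_logb_of_le (by norm_num) (by positivity)
  have hs : (0:ℝ) < 2 * σ2 := by linarith
  simp only [div_eq_mul_inv]
  nlinarith [mul_nonneg (mul_nonneg (sub_nonneg.2 hγ2b.le) (sub_nonneg.2 huv)) (inv_pos.2 hs).le,
    inv_pos.2 hs]

lemma bracket (L1 L2 σ2 γ1 γ2 : ℝ) (hL1 : 0 < L1) (hL2 : 0 < L2) (hσ : 0 < σ2)
    (hγ2a : 0 < γ2) (hγ2b : γ2 < 1) (hsum : γ1 + γ2 = 1)
    (x1 x2 : ℝ) (hx1 : 0 < x1) (hx2 : 0 < x2) :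
    max (Real.logb 2 (1 + γ1 * L1 * x1 / (γ2 * L1 * x1 + 2 * σ2)))
        (Real.logb 2 (1 + γ1 * L2 * x2 / (γ2 * L2 * x2 + 2 * σ2)))
      + Real.logb 2 (1 + γ2 * L2 * x2 / (2 * σ2))
    = (Real.logb 2 (1 + (L1*x1) / (2*σ2)) - Real.logb 2 (1 + γ2*(L1*x1) / (2*σ2)))
      + Real.logb 2 (1 + (L2*x2) / (2*σ2))
      - Real.logb 2 (1 + (1/(2*σ2)) * min (L1*x1) (L2*x2))
      + Real.logb 2 (1 + (γ2/(2*σ2)) * min (L1*x1) (L2*x2)) := by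
  have h1 : 1 + γ1 * L1 * x1 / (γ2 * L1 * x1 + 2 * σ2)
      = 1 + γ1 * (L1*x1) / (γ2 * (L1*x1) + 2 * σ2) := by ring_nf
  have h2 : 1 + γ1 * L2 * x2 / (γ2 * L2 * x2 + 2 * σ2)
      = 1 + γ1 * (L2*x2) / (γ2 * (L2*x2) + 2 * σ2) := by ring_nf
  have h3 : 1 + γ2 * L2 * x2 / (2 * σ2) = 1 + γ2 * (L2*x2) / (2 * σ2) := by ring_nf
  rw [h1, h2, h3, quot_logb σ2 γ1 γ2 (L1*x1) hσ hγ2a hγ2b hsum (by positivity),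
    quot_logb σ2 γ1 γ2 (L2*x2) hσ hγ2a hγ2b hsum (by positivity)]
  rcases le_total (L1*x1) (L2*x2) with h | h
  · rw [min_eq_left h,
      show 1 + (1/(2*σ2)) * (L1*x1) = 1 + (L1*x1)/(2*σ2) by ring,
      show 1 + (γ2/(2*σ2)) * (L1*x1) = 1 + γ2*(L1*x1)/(2*σ2) by ring,
      max_eq_right (mono_logb σ2 γ2 (L1*x1) (L2*x2) hσ hγ2a hγ2b (by positivity) h)]
    ring
  · rw [min_eq_right h,
      show 1 + (1/(2*σ2)) * (L2*x2) = 1 + (L2*x2)/(2*σ2) by ring,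
      show 1 + (γ2/(2*σ2)) * (L2*x2) = 1 + γ2*(L2*x2)/(2*σ2) by ring,
      max_eq_left (mono_logb σ2 γ2 (L2*x2) (L1*x1) hσ hγ2a hγ2b (by positivity) h)]
    ring

lemma Gmin_inner_int (b L1 L2 : ℝ) (hb : 0 < b) (h2 : 0 < L2) (x1 : ℝ) :
    IntegrableOn (fun x2 => (1/4) * Real.exp (-x1/2) * Real.exp (-x2/2) *
      Real.logb 2 (1 + b * min (L1*x1) (L2*x2))) (Ioi 0) := by
  have h : IntegrableOn (fun x2 => G1f b L1 L2 x1 x2 + G2f b L1 L2 x1 x2) (Ioi 0) :=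
    (G1_inner_int b L1 L2 hb h2 x1).add (G2_inner_int b L1 L2 x1)
  exact h.congr_fun (fun x2 _ => (G_split b L1 L2 x1 x2).symm) measurableSet_Ioi

lemma Gmin_prod_int (b L1 L2 : ℝ) (hb : 0 < b) (h1 : 0 < L1) (h2 : 0 < L2) :
    Integrable (fun p : ℝ × ℝ => (1/4) * Real.exp (-p.1/2) * Real.exp (-p.2/2) *
      Real.logb 2 (1 + b * min (L1*p.1) (L2*p.2)))
      ((volume.restrict (Ioi 0)).prod (volume.restrict (Ioi 0))) :=
  ((G1_prod_int b L1 L2 hb h2).add (G2_prod_int b L1 L2 hb h1)).congr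
    (Filter.Eventually.of_forall (fun p => (G_split b L1 L2 p.1 p.2).symm))

lemma KLhalf (c : ℝ) (hc : 0 < c) :
    ∫ x in Ioi (0:ℝ), Real.exp (-x/2) * Real.logb 2 (1 + c * x) = 2 * C1 (2*c) := by
  have h := KL' (1/2) c (by norm_num) hc
  calc ∫ x in Ioi (0:ℝ), Real.exp (-x/2) * Real.logb 2 (1 + c * x)
      = ∫ x in Ioi (0:ℝ), Real.exp (-(((1:ℝ)/2) * x)) * Real.logb 2 (1 + c * x) :=
        setIntegral_congr_fun measurableSet_Ioi (fun x _ => by rw [← expHalf])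
    _ = C1 (c / (1/2)) / (1/2) := h
    _ = 2 * C1 (2*c) := by rw [show c / ((1:ℝ)/2) = 2*c by ring]; ring

theorem stmt3 (L1 L2 σ2 γ1 γ2 : ℝ) (hL1 : 0 < L1) (hL2 : 0 < L2) (hσ : 0 < σ2)
    (hγ1 : γ1 ∈ Set.Ioo (0:ℝ) 1) (hγ2 : γ2 ∈ Set.Ioo (0:ℝ) 1) (hsum : γ1 + γ2 = 1) :
    (∫ x1 in Set.Ioi (0:ℝ), ∫ x2 in Set.Ioi (0:ℝ),
      (1/4) * Real.exp (-x1/2) * Real.exp (-x2/2) *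
        (max (Real.logb 2 (1 + γ1 * L1 * x1 / (γ2 * L1 * x1 + 2 * σ2)))
             (Real.logb 2 (1 + γ1 * L2 * x2 / (γ2 * L2 * x2 + 2 * σ2)))
          + Real.logb 2 (1 + γ2 * L2 * x2 / (2 * σ2))))
      = C1 (L1 / σ2) - C1 (γ2 * L1 / σ2) + C1 (L2 / σ2)
        - C1 (L1 * L2 / ((L1 + L2) * σ2)) + C1 (γ2 * L1 * L2 / ((L1 + L2) * σ2)) := by
  obtain ⟨hγ2a, hγ2b⟩ := hγ2
  have hb1 : (0:ℝ) < 1/(2*σ2) := by positivity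
  have hb2 : (0:ℝ) < γ2/(2*σ2) := by positivity
  have hL12 : (0:ℝ) < L1 + L2 := by linarith
  have key : ∀ x1 ∈ Ioi (0:ℝ),
      (∫ x2 in Set.Ioi (0:ℝ),
        (1/4) * Real.exp (-x1/2) * Real.exp (-x2/2) *
          (max (Real.logb 2 (1 + γ1 * L1 * x1 / (γ2 * L1 * x1 + 2 * σ2)))
               (Real.logb 2 (1 + γ1 * L2 * x2 / (γ2 * L2 * x2 + 2 * σ2)))
            + Real.logb 2 (1 + γ2 * L2 * x2 / (2 * σ2))))
      = (1/2) * Real.exp (-x1/2) * (Real.logb 2 (1 + (L1/(2*σ2)) * x1)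
            - Real.logb 2 (1 + (γ2*L1/(2*σ2)) * x1))
        + ((1/4) * Real.exp (-x1/2)) *
            (∫ x2 in Ioi (0:ℝ), Real.exp (-x2/2) * Real.logb 2 (1 + (L2/(2*σ2)) * x2))
        - (∫ x2 in Ioi (0:ℝ), (1/4) * Real.exp (-x1/2) * Real.exp (-x2/2) *
            Real.logb 2 (1 + (1/(2*σ2)) * min (L1*x1) (L2*x2)))
        + (∫ x2 in Ioi (0:ℝ), (1/4) * Real.exp (-x1/2) * Real.exp (-x2/2) *
            Real.logb 2 (1 + (γ2/(2*σ2)) * min (L1*x1) (L2*x2))) := by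
    intro x1 hx1
    have hx1' : (0:ℝ) < x1 := hx1
    have hpt : ∀ x2 ∈ Ioi (0:ℝ),
        (1/4) * Real.exp (-x1/2) * Real.exp (-x2/2) *
          (max (Real.logb 2 (1 + γ1 * L1 * x1 / (γ2 * L1 * x1 + 2 * σ2)))
               (Real.logb 2 (1 + γ1 * L2 * x2 / (γ2 * L2 * x2 + 2 * σ2)))
            + Real.logb 2 (1 + γ2 * L2 * x2 / (2 * σ2)))
        = ((1/4) * Real.exp (-x1/2) * (Real.logb 2 (1 + (L1/(2*σ2)) * x1)
              - Real.logb 2 (1 + (γ2*L1/(2*σ2)) * x1))) * Real.exp (-x2/2)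
          + ((1/4) * Real.exp (-x1/2)) *
              (Real.exp (-x2/2) * Real.logb 2 (1 + (L2/(2*σ2)) * x2))
          - (1/4) * Real.exp (-x1/2) * Real.exp (-x2/2) *
              Real.logb 2 (1 + (1/(2*σ2)) * min (L1*x1) (L2*x2))
          + (1/4) * Real.exp (-x1/2) * Real.exp (-x2/2) *
              Real.logb 2 (1 + (γ2/(2*σ2)) * min (L1*x1) (L2*x2)) := by
      intro x2 hx2
      have hx2' : (0:ℝ) < x2 := hx2
      rw [bracket L1 L2 σ2 γ1 γ2 hL1 hL2 hσ hγ2a hγ2b hsum x1 x2 hx1' hx2']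
      rw [show 1 + (L1/(2*σ2)) * x1 = 1 + (L1*x1)/(2*σ2) by ring,
        show 1 + (γ2*L1/(2*σ2)) * x1 = 1 + γ2*(L1*x1)/(2*σ2) by ring,
        show 1 + (L2/(2*σ2)) * x2 = 1 + (L2*x2)/(2*σ2) by ring]
      ring
    rw [setIntegral_congr_fun measurableSet_Ioi hpt]
    have hpa : IntegrableOn (fun x2 : ℝ =>
        ((1/4) * Real.exp (-x1/2) * (Real.logb 2 (1 + (L1/(2*σ2)) * x1)
          - Real.logb 2 (1 + (γ2*L1/(2*σ2)) * x1))) * Real.exp (-x2/2)) (Ioi 0) :=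
      (intOn_expHalf 0).const_mul _
    have hpb : IntegrableOn (fun x2 : ℝ => ((1/4) * Real.exp (-x1/2)) *
        (Real.exp (-x2/2) * Real.logb 2 (1 + (L2/(2*σ2)) * x2))) (Ioi 0) :=
      (intOn_exp_logb_half (L2/(2*σ2)) (by positivity)).const_mul _
    have hpc := Gmin_inner_int (1/(2*σ2)) L1 L2 hb1 hL2 x1
    have hpd := Gmin_inner_int (γ2/(2*σ2)) L1 L2 hb2 hL2 x1
    have hpab : IntegrableOn (fun x2 : ℝ => ((1/4) * Real.exp (-x1/2) * (Real.logb 2 (1 + (L1/(2*σ2)) * x1)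
          - Real.logb 2 (1 + (γ2*L1/(2*σ2)) * x1))) * Real.exp (-x2/2)
        + ((1/4) * Real.exp (-x1/2)) * (Real.exp (-x2/2) * Real.logb 2 (1 + (L2/(2*σ2)) * x2))) (Ioi 0) := hpa.add hpb
    have hpabc : IntegrableOn (fun x2 : ℝ => ((1/4) * Real.exp (-x1/2) * (Real.logb 2 (1 + (L1/(2*σ2)) * x1)
          - Real.logb 2 (1 + (γ2*L1/(2*σ2)) * x1))) * Real.exp (-x2/2)
        + ((1/4) * Real.exp (-x1/2)) * (Real.exp (-x2/2) * Real.logb 2 (1 + (L2/(2*σ2)) * x2))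
        - (1/4) * Real.exp (-x1/2) * Real.exp (-x2/2) * Real.logb 2 (1 + (1/(2*σ2)) * min (L1*x1) (L2*x2))) (Ioi 0) := hpab.sub hpc
    rw [integral_add hpabc hpd, integral_sub hpab hpc,
      integral_add hpa hpb, integral_const_mul, integral_const_mul, int_expHalf 0]
    simp only [neg_zero, zero_div, Real.exp_zero]
    ring
  rw [setIntegral_congr_fun measurableSet_Ioi key]
  have hOa : IntegrableOn (fun x1 : ℝ => (1/2) * Real.exp (-x1/2) *
      (Real.logb 2 (1 + (L1/(2*σ2)) * x1) - Real.logb 2 (1 + (γ2*L1/(2*σ2)) * x1))) (Ioi 0) := by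
    have hA : IntegrableOn (fun x1 : ℝ => (1/2) * (Real.exp (-x1/2) *
        Real.logb 2 (1 + (L1/(2*σ2)) * x1))) (Ioi 0) :=
      (intOn_exp_logb_half (L1/(2*σ2)) (by positivity)).const_mul (1/2)
    have hB : IntegrableOn (fun x1 : ℝ => (1/2) * (Real.exp (-x1/2) *
        Real.logb 2 (1 + (γ2*L1/(2*σ2)) * x1))) (Ioi 0) :=
      (intOn_exp_logb_half (γ2*L1/(2*σ2)) (by positivity)).const_mul (1/2)
    have hAB : IntegrableOn (fun x1 : ℝ => (1/2) * (Real.exp (-x1/2) *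
        Real.logb 2 (1 + (L1/(2*σ2)) * x1)) - (1/2) * (Real.exp (-x1/2) *
        Real.logb 2 (1 + (γ2*L1/(2*σ2)) * x1))) (Ioi 0) := hA.sub hB
    exact hAB.congr_fun (fun x _ => by ring) measurableSet_Ioi
  have hOb : IntegrableOn (fun x1 : ℝ => ((1/4) * Real.exp (-x1/2)) *
      (∫ x2 in Ioi (0:ℝ), Real.exp (-x2/2) * Real.logb 2 (1 + (L2/(2*σ2)) * x2))) (Ioi 0) := by
    have h : IntegrableOn (fun x1 : ℝ => (1/4) * (Real.exp (-x1/2) *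
        (∫ x2 in Ioi (0:ℝ), Real.exp (-x2/2) * Real.logb 2 (1 + (L2/(2*σ2)) * x2)))) (Ioi 0) :=
      ((intOn_expHalf 0).mul_const _).const_mul (1/4)
    exact h.congr_fun (fun x _ => by ring) measurableSet_Ioi
  have hOc : IntegrableOn (fun x1 : ℝ => ∫ x2 in Ioi (0:ℝ),
      (1/4) * Real.exp (-x1/2) * Real.exp (-x2/2) *
        Real.logb 2 (1 + (1/(2*σ2)) * min (L1*x1) (L2*x2))) (Ioi 0) :=
    (Gmin_prod_int (1/(2*σ2)) L1 L2 hb1 hL1 hL2).integral_prod_left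
  have hOd : IntegrableOn (fun x1 : ℝ => ∫ x2 in Ioi (0:ℝ),
      (1/4) * Real.exp (-x1/2) * Real.exp (-x2/2) *
        Real.logb 2 (1 + (γ2/(2*σ2)) * min (L1*x1) (L2*x2))) (Ioi 0) :=
    (Gmin_prod_int (γ2/(2*σ2)) L1 L2 hb2 hL1 hL2).integral_prod_left
  have hOab : IntegrableOn (fun x1 : ℝ => (1/2) * Real.exp (-x1/2) * (Real.logb 2 (1 + (L1/(2*σ2)) * x1) - Real.logb 2 (1 + (γ2*L1/(2*σ2)) * x1))
      + ((1/4) * Real.exp (-x1/2)) * (∫ x2 in Ioi (0:ℝ), Real.exp (-x2/2) * Real.logb 2 (1 + (L2/(2*σ2)) * x2))) (Ioi 0) := hOa.add hOb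
  have hOabc : IntegrableOn (fun x1 : ℝ => (1/2) * Real.exp (-x1/2) * (Real.logb 2 (1 + (L1/(2*σ2)) * x1) - Real.logb 2 (1 + (γ2*L1/(2*σ2)) * x1))
      + ((1/4) * Real.exp (-x1/2)) * (∫ x2 in Ioi (0:ℝ), Real.exp (-x2/2) * Real.logb 2 (1 + (L2/(2*σ2)) * x2))
      - (∫ x2 in Ioi (0:ℝ), (1/4) * Real.exp (-x1/2) * Real.exp (-x2/2) * Real.logb 2 (1 + (1/(2*σ2)) * min (L1*x1) (L2*x2)))) (Ioi 0) := hOab.sub hOc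
  rw [integral_add hOabc hOd, integral_sub hOab hOc, integral_add hOa hOb]
  have vA : (∫ x1 in Ioi (0:ℝ), (1/2) * Real.exp (-x1/2) *
      (Real.logb 2 (1 + (L1/(2*σ2)) * x1) - Real.logb 2 (1 + (γ2*L1/(2*σ2)) * x1)))
      = C1 (L1/σ2) - C1 (γ2*L1/σ2) := by
    have e : (fun x1 : ℝ => (1/2) * Real.exp (-x1/2) *
        (Real.logb 2 (1 + (L1/(2*σ2)) * x1) - Real.logb 2 (1 + (γ2*L1/(2*σ2)) * x1)))
        = fun x1 : ℝ => (1/2) * (Real.exp (-x1/2) * Real.logb 2 (1 + (L1/(2*σ2)) * x1))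
          - (1/2) * (Real.exp (-x1/2) * Real.logb 2 (1 + (γ2*L1/(2*σ2)) * x1)) := by
      funext x; ring
    rw [e, integral_sub ((intOn_exp_logb_half (L1/(2*σ2)) (by positivity)).const_mul (1/2))
        ((intOn_exp_logb_half (γ2*L1/(2*σ2)) (by positivity)).const_mul (1/2)),
      integral_const_mul, integral_const_mul,
      KLhalf (L1/(2*σ2)) (by positivity), KLhalf (γ2*L1/(2*σ2)) (by positivity),
      show 2*(L1/(2*σ2)) = L1/σ2 by field_simp,
      show 2*(γ2*L1/(2*σ2)) = γ2*L1/σ2 by field_simp]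
    ring
  have vB : (∫ x1 in Ioi (0:ℝ), ((1/4) * Real.exp (-x1/2)) *
      (∫ x2 in Ioi (0:ℝ), Real.exp (-x2/2) * Real.logb 2 (1 + (L2/(2*σ2)) * x2)))
      = C1 (L2/σ2) := by
    have e : (fun x1 : ℝ => ((1/4) * Real.exp (-x1/2)) *
        (∫ x2 in Ioi (0:ℝ), Real.exp (-x2/2) * Real.logb 2 (1 + (L2/(2*σ2)) * x2)))
        = fun x1 : ℝ => ((∫ x2 in Ioi (0:ℝ), Real.exp (-x2/2) *
            Real.logb 2 (1 + (L2/(2*σ2)) * x2)) * (1/4)) * Real.exp (-x1/2) := by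
      funext x; ring
    rw [e, integral_const_mul, int_expHalf 0,
      KLhalf (L2/(2*σ2)) (by positivity),
      show 2*(L2/(2*σ2)) = L2/σ2 by field_simp]
    simp only [neg_zero, zero_div, Real.exp_zero]
    ring
  have vC := KM (1/(2*σ2)) L1 L2 hb1 hL1 hL2
  have vD := KM (γ2/(2*σ2)) L1 L2 hb2 hL1 hL2
  rw [vA, vB, vC, vD,
    show 2*(1/(2*σ2))*L1*L2/(L1+L2) = L1*L2/((L1+L2)*σ2) by field_simp,
    show 2*(γ2/(2*σ2))*L1*L2/(L1+L2) = γ2*L1*L2/((L1+L2)*σ2) by field_simp]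
end

section
/- Let L₁, L₂, σ² > 0 and γ₁, γ₂ ∈ (0,1) with γ₁ + γ₂ = 1. Then ∫_0^∞ ∫_0^∞ (1/4) e^{-x₁/2} e^{-x₂/2} · max{ log₂(1 + γ₁L₁x₁/(γ₂L₁x₁ + 2σ²)), log₂(1 + γ₁L₂x₂/(γ₂L₂x₂ + 2σ²)) } dx₁ dx₂ = C₁(L₁/σ²) − C₁(γ₂L₁/σ²) + C₁(L₂/σ²) − C₁(γ₂L₂/σ²) − C₁(L₁L₂/((L₁+L₂)σ²)) + C₁(γ₂L₁L₂/((L₁+L₂)σ²)). -/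
set_option maxHeartbeats 2000000

open Real MeasureTheory Set Filter

noncomputable def Gf (b c u : ℝ) : ℝ := Real.log (1 + u/c) - Real.log (1 + b*u/c)

-- substitution t = 1 + a v

-- tail integral of exponential
lemma tail_exp (μ a : ℝ) (hμ : 0 < μ) :
    ∫ x in Ioi a, Real.exp (-(μ*x)) = μ⁻¹ * Real.exp (-(μ*a)) := by
  have := integral_comp_mul_left_Ioi (fun x => Real.exp (-x)) a hμ
  simp only [smul_eq_mul] at this
  rw [this, integral_exp_neg_Ioi]

-- translation for Ioi
lemma integral_comp_add_right_Ioi (f : ℝ → ℝ) (a d : ℝ) :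
    ∫ x in Ioi a, f (x + d) = ∫ x in Ioi (a + d), f x := by
  rw [← integral_indicator measurableSet_Ioi, ← integral_indicator measurableSet_Ioi]
  rw [← MeasureTheory.integral_add_right_eq_self (fun x => (Ioi (a+d)).indicator f x) d]
  congr 1
  ext x
  by_cases h : x ∈ Ioi a
  · rw [indicator_of_mem h, indicator_of_mem (by simpa using add_lt_add_right h.out d : x + d ∈ Ioi (a+d))]
  · rw [indicator_of_notMem h, indicator_of_notMem (by simp at h ⊢; linarith)]

lemma core_subst (a : ℝ) (ha : 0 < a) :
    ∫ t in Ioi (1:ℝ), t⁻¹ * Real.exp (-t/a)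
      = Real.exp (-(1/a)) * ∫ v in Ioi (0:ℝ), (a / (1 + a*v)) * Real.exp (-v) := by
  have h1 := integral_comp_mul_left_Ioi (fun t => t⁻¹ * Real.exp (-t/a)) (1/a) ha
  have h2 : a * (1/a) = 1 := by field_simp
  rw [h2] at h1
  have h1' : ∫ t in Ioi (1:ℝ), t⁻¹ * Real.exp (-t/a)
      = a * ∫ x in Ioi (1/a), (a*x)⁻¹ * Real.exp (-(a*x)/a) := by
    rw [h1, smul_eq_mul]; field_simp
  have h3 := integral_comp_add_right_Ioi (fun x => (a*x)⁻¹ * Real.exp (-(a*x)/a)) 0 (1/a)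
  rw [zero_add] at h3
  rw [h1', ← h3, ← integral_const_mul, ← integral_const_mul]
  apply setIntegral_congr_fun measurableSet_Ioi
  intro v hv
  have hv' : (0:ℝ) < v := hv
  have hd : (0:ℝ) < 1 + a*v := by positivity
  have e1 : a * (v + 1/a) = 1 + a*v := by field_simp; ring
  simp only [e1]
  have e2 : -(1 + a*v)/a = -v + -(1/a) := by field_simp; ring
  rw [e2, Real.exp_add]
  field_simp

lemma int_exp_log (a μ : ℝ) (ha : 0 < a) (hμ : 0 < μ) :
    IntegrableOn (fun v => Real.exp (-(μ*v)) * Real.log (1+a*v)) (Ioi 0) := by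
  apply Integrable.mono' (((exp_neg_integrableOn_Ioi 0 (half_pos hμ)).const_mul (2*a/μ)))
  · exact ((Real.continuous_exp.comp (continuous_const.mul continuous_id).neg).measurable.mul
      (Real.measurable_log.comp ((measurable_id.const_mul a).const_add 1))).aestronglyMeasurable
  · filter_upwards [ae_restrict_mem measurableSet_Ioi] with v hv
    have hv' : (0:ℝ) < v := hv
    have h1 : (0:ℝ) < 1 + a*v := by positivity
    have hlog0 : 0 ≤ Real.log (1+a*v) := Real.log_nonneg (by nlinarith)
    have hlog : Real.log (1+a*v) ≤ a*v := by
      have := Real.log_le_sub_one_of_pos h1; linarith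
    have hev : μ/2*v + 1 ≤ Real.exp (μ/2*v) := Real.add_one_le_exp _
    have hexp : Real.exp (-(μ*v)) * Real.exp (μ/2*v) = Real.exp (-(μ/2)*v) := by
      rw [← Real.exp_add]; ring_nf
    rw [norm_mul, norm_of_nonneg (le_of_lt (Real.exp_pos _)), norm_of_nonneg hlog0]
    calc Real.exp (-(μ*v)) * Real.log (1+a*v) ≤ Real.exp (-(μ*v)) * (a*v) := by
          exact mul_le_mul_of_nonneg_left hlog (le_of_lt (Real.exp_pos _))
      _ ≤ Real.exp (-(μ*v)) * (2*a/μ * Real.exp (μ/2*v)) := by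
          apply mul_le_mul_of_nonneg_left _ (le_of_lt (Real.exp_pos _))
          rw [div_mul_eq_mul_div, le_div_iff₀ hμ]
          nlinarith [Real.exp_pos (μ/2*v)]
      _ = 2*a/μ * Real.exp (-(μ/2)*v) := by rw [← hexp]; ring

lemma int_exp_div (a : ℝ) (ha : 0 < a) :
    IntegrableOn (fun v => (a/(1+a*v)) * Real.exp (-v)) (Ioi 0) := by
  apply Integrable.mono' ((exp_neg_integrableOn_Ioi 0 one_pos).const_mul a)
  · exact ((measurable_const.div ((measurable_id.const_mul a).const_add 1)).mul
      (Real.continuous_exp.comp continuous_neg).measurable).aestronglyMeasurable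
  · filter_upwards [ae_restrict_mem measurableSet_Ioi] with v hv
    have hv' : (0:ℝ) < v := hv
    have h1 : (0:ℝ) < 1 + a*v := by positivity
    rw [norm_mul, norm_of_nonneg (le_of_lt (Real.exp_pos _)),
      norm_of_nonneg (le_of_lt (div_pos ha h1))]
    have : a/(1+a*v) ≤ a := by
      rw [div_le_iff₀ h1]; nlinarith [mul_pos (mul_pos ha ha) hv']
    have h2 : (-1:ℝ)*v = -v := by ring
    rw [h2]
    exact mul_le_mul_of_nonneg_right this (le_of_lt (Real.exp_pos _))

lemma core_ibp (a : ℝ) (ha : 0 < a) :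
    ∫ v in Ioi (0:ℝ), Real.exp (-v) * Real.log (1 + a*v)
      = ∫ v in Ioi (0:ℝ), (a / (1 + a*v)) * Real.exp (-v) := by
  set F : ℝ → ℝ := fun v => -Real.exp (-v) * Real.log (1 + a*v) with hF
  set F' : ℝ → ℝ := fun v =>
    Real.exp (-v) * Real.log (1+a*v) - (a/(1+a*v)) * Real.exp (-v) with hF'
  have hderiv : ∀ x ∈ Ici (0:ℝ), HasDerivAt F (F' x) x := by
    intro x hx
    have hx0 : (0:ℝ) ≤ x := hx
    have h1 : (0:ℝ) < 1 + a*x := by positivity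
    have hu : HasDerivAt (fun v : ℝ => -Real.exp (-v)) (Real.exp (-x)) x := by
      have := ((Real.hasDerivAt_exp (-x)).comp x (hasDerivAt_neg x)).neg
      simp at this; exact this
    have hw : HasDerivAt (fun v : ℝ => Real.log (1 + a*v)) (a/(1+a*x)) x := by
      have h2 : HasDerivAt (fun v : ℝ => 1 + a*v) a x := by
        simpa using ((hasDerivAt_id x).const_mul a).const_add 1
      simpa using h2.log (ne_of_gt h1)
    have := hu.mul hw
    refine HasDerivAt.congr_deriv this ?_
    simp only [hF']
    ring
  have hint1 : IntegrableOn (fun v => Real.exp (-v) * Real.log (1+a*v)) (Ioi 0) := by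
    have := int_exp_log a 1 ha one_pos
    simpa using this
  have hint2 := int_exp_div a ha
  have f'int : IntegrableOn F' (Ioi 0) := hint1.sub hint2
  have hlim : Tendsto F atTop (nhds 0) := by
    apply squeeze_zero_norm' _ (by simpa using (tendsto_pow_mul_exp_neg_atTop_nhds_zero 1).const_mul a)
    filter_upwards [eventually_gt_atTop (0:ℝ)] with v hv
    have h1 : (0:ℝ) < 1 + a*v := by positivity
    have hlog0 : 0 ≤ Real.log (1+a*v) := Real.log_nonneg (by nlinarith)
    have hlog : Real.log (1+a*v) ≤ a*v := by
      have := Real.log_le_sub_one_of_pos h1; linarith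
    simp only [hF, norm_mul, norm_neg, norm_of_nonneg (le_of_lt (Real.exp_pos _)),
      norm_of_nonneg hlog0, pow_one]
    calc Real.exp (-v) * Real.log (1+a*v) ≤ Real.exp (-v) * (a*v) :=
        mul_le_mul_of_nonneg_left hlog (le_of_lt (Real.exp_pos _))
      _ = a * (v * Real.exp (-v)) := by ring
  have key := integral_Ioi_of_hasDerivAt_of_tendsto' hderiv f'int hlim
  have hF0 : F 0 = 0 := by simp [hF]
  rw [hF0, sub_zero] at key
  have := integral_sub hint1 hint2
  rw [show (fun v => Real.exp (-v) * Real.log (1+a*v) - (a/(1+a*v)) * Real.exp (-v)) = F' from rfl] at this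
  rw [key] at this
  linarith [this]


lemma logexp (a : ℝ) (ha : 0 < a) :
    ∫ v in Ioi (0:ℝ), Real.exp (-v) * Real.log (1 + a*v)
      = Real.exp (1/a) * ∫ t in Ioi (1:ℝ), t⁻¹ * Real.exp (-t/a) := by
  rw [core_subst a ha, core_ibp a ha, ← mul_assoc, ← Real.exp_add]
  simp

lemma key (k μ : ℝ) (hk : 0 < k) (hμ : 0 < μ) :
    ∫ x in Ioi (0:ℝ), Real.exp (-(μ*x)) * Real.log (1+k*x)
      = μ⁻¹ * (Real.log 2 * C1 (k/μ)) := by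
  have hkμ : 0 < k/μ := div_pos hk hμ
  have hsub := integral_comp_mul_left_Ioi
    (fun v => Real.exp (-v) * Real.log (1 + (k/μ)*v)) 0 hμ
  rw [mul_zero, smul_eq_mul] at hsub
  have e1 : (fun x => (fun v => Real.exp (-v) * Real.log (1 + (k/μ)*v)) (μ*x))
      = fun x => Real.exp (-(μ*x)) * Real.log (1+k*x) := by
    funext x
    simp only
    congr 2
    field_simp
  rw [e1] at hsub
  rw [hsub, logexp _ hkμ]
  have hlog2 : Real.log 2 ≠ 0 := ne_of_gt (Real.log_pos (by norm_num))
  rw [C1]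
  field_simp

lemma single (k1 k2 μ : ℝ) (h1 : 0 < k1) (h2 : 0 < k2) (hμ : 0 < μ) :
    ∫ x in Ioi (0:ℝ), Real.exp (-(μ*x)) * (Real.log (1+k1*x) - Real.log (1+k2*x))
      = μ⁻¹ * Real.log 2 * (C1 (k1/μ) - C1 (k2/μ)) := by
  have e : (fun x => Real.exp (-(μ*x)) * (Real.log (1+k1*x) - Real.log (1+k2*x)))
      = fun x => Real.exp (-(μ*x)) * Real.log (1+k1*x) - Real.exp (-(μ*x)) * Real.log (1+k2*x) := by
    funext x; ring
  rw [e, integral_sub (int_exp_log k1 μ h1 hμ) (int_exp_log k2 μ h2 hμ),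
    key k1 μ h1 hμ, key k2 μ h2 hμ]
  ring


lemma Gf_alt {b c : ℝ} (hb : 0 < b) (hc : 0 < c) {u : ℝ} (hu : 0 ≤ u) :
    Gf b c u = Real.log (c+u) - Real.log (c+b*u) := by
  unfold Gf
  rw [show 1+u/c = (c+u)/c by field_simp, show 1+b*u/c = (c+b*u)/c by field_simp,
    Real.log_div (by positivity) (ne_of_gt hc), Real.log_div (by positivity) (ne_of_gt hc)]
  ring

lemma Gf_nonneg {b c : ℝ} (hb : 0 < b) (hb1 : b ≤ 1) (hc : 0 < c) {u : ℝ} (hu : 0 ≤ u) :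
    0 ≤ Gf b c u := by
  rw [Gf_alt hb hc hu]
  have : Real.log (c+b*u) ≤ Real.log (c+u) :=
    Real.log_le_log (by positivity) (by nlinarith)
  linarith

lemma Gf_le {b c : ℝ} (hb : 0 < b) (hb1 : b ≤ 1) (hc : 0 < c) {u : ℝ} (hu : 0 ≤ u) :
    Gf b c u ≤ -Real.log b := by
  rw [Gf_alt hb hc hu]
  have h := Real.log_le_log (show (0:ℝ) < c+u by positivity)
    (show c+u ≤ (c+b*u)/b by rw [le_div_iff₀ hb]; nlinarith)
  rw [Real.log_div (by positivity) (ne_of_gt hb)] at h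
  linarith

lemma Gf_mono {b c : ℝ} (hb : 0 < b) (hb1 : b ≤ 1) (hc : 0 < c) {u v : ℝ}
    (hu : 0 ≤ u) (huv : u ≤ v) : Gf b c u ≤ Gf b c v := by
  rw [Gf_alt hb hc hu, Gf_alt hb hc (le_trans hu huv)]
  have hv : 0 ≤ v := le_trans hu huv
  have p1 : (0:ℝ) < c + u := by linarith
  have p2 : (0:ℝ) < c + v := by linarith
  have p3 : (0:ℝ) < c + b*u := by nlinarith
  have p4 : (0:ℝ) < c + b*v := by nlinarith
  have h : Real.log ((c+u)*(c+b*v)) ≤ Real.log ((c+v)*(c+b*u)) :=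
    Real.log_le_log (by positivity)
      (by nlinarith [mul_nonneg (mul_nonneg hc.le (sub_nonneg.mpr hb1)) (sub_nonneg.mpr huv)])
  rw [Real.log_mul (ne_of_gt p1) (ne_of_gt p4), Real.log_mul (ne_of_gt p2) (ne_of_gt p3)] at h
  linarith

lemma Gf_min {b c : ℝ} (hb : 0 < b) (hb1 : b ≤ 1) (hc : 0 < c) {u v : ℝ}
    (hu : 0 ≤ u) (hv : 0 ≤ v) :
    min (Gf b c u) (Gf b c v) = Gf b c (min u v) := by
  rcases le_total u v with h | h
  · rw [min_eq_left h, min_eq_left (Gf_mono hb hb1 hc hu h)]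
  · rw [min_eq_right h, min_eq_right (Gf_mono hb hb1 hc hv h)]

lemma Gf_measurable (b c : ℝ) : Measurable (Gf b c) := by
  unfold Gf
  exact (Real.measurable_log.comp ((measurable_id.div_const c).const_add 1)).sub
    (Real.measurable_log.comp (((measurable_id.const_mul b).div_const c).const_add 1))

lemma logb_eq (L σ2 γ1 γ2 : ℝ) (hL : 0 < L) (hσ : 0 < σ2) (hγ2 : 0 < γ2)
    (hsum : γ1 + γ2 = 1) (x : ℝ) (hx : 0 ≤ x) :
    Real.logb 2 (1 + γ1*L*x/(γ2*L*x + 2*σ2))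
      = Gf γ2 (2*σ2) (L*x) / Real.log 2 := by
  have hd : 0 < γ2*L*x + 2*σ2 := by positivity
  have hu : 0 ≤ L*x := by positivity
  have e1 : 1 + γ1*L*x/(γ2*L*x+2*σ2) = (2*σ2 + L*x)/(2*σ2 + γ2*(L*x)) := by
    rw [show γ1 = 1 - γ2 by linarith]
    field_simp
    ring
  rw [e1, Real.logb, Real.log_div (by positivity) (by positivity), Gf_alt hγ2 (by positivity) hu]

lemma int_exp_G {h : ℝ → ℝ} (hm : Measurable h) {μ C : ℝ} (hμ : 0 < μ)
    (hC : ∀ x ∈ Ioi (0:ℝ), |h x| ≤ C) :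
    IntegrableOn (fun x => Real.exp (-(μ*x)) * h x) (Ioi 0) := by
  apply Integrable.mono' ((exp_neg_integrableOn_Ioi 0 hμ).const_mul C)
  · exact ((Real.continuous_exp.comp (continuous_const.mul continuous_id).neg).measurable.mul
      hm).aestronglyMeasurable
  · filter_upwards [ae_restrict_mem measurableSet_Ioi] with v hv
    rw [norm_mul, norm_of_nonneg (le_of_lt (Real.exp_pos _))]
    have h2 : -μ*v = -(μ*v) := by ring
    rw [h2, mul_comm C]
    exact mul_le_mul_of_nonneg_left (hC v hv) (le_of_lt (Real.exp_pos _))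

lemma single' (L c b μ : ℝ) (hL : 0 < L) (hc : 0 < c) (hb : 0 < b) (hμ : 0 < μ) :
    ∫ x in Ioi (0:ℝ), Real.exp (-(μ*x)) * Gf b c (L*x)
      = μ⁻¹ * Real.log 2 * (C1 (L/(c*μ)) - C1 (b*L/(c*μ))) := by
  have e : (fun x => Real.exp (-(μ*x)) * Gf b c (L*x))
      = fun x => Real.exp (-(μ*x)) * (Real.log (1+(L/c)*x) - Real.log (1+(b*L/c)*x)) := by
    funext x; unfold Gf; ring_nf
  rw [e, single (L/c) (b*L/c) μ (by positivity) (by positivity) hμ,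
    div_div, div_div, mul_div_assoc]


theorem stmt4 (L1 L2 σ2 γ1 γ2 : ℝ) (hL1 : 0 < L1) (hL2 : 0 < L2) (hσ : 0 < σ2)
    (hγ1 : γ1 ∈ Set.Ioo (0:ℝ) 1) (hγ2 : γ2 ∈ Set.Ioo (0:ℝ) 1) (hsum : γ1 + γ2 = 1) :
    (∫ x1 in Set.Ioi (0:ℝ), ∫ x2 in Set.Ioi (0:ℝ),
      (1/4) * Real.exp (-x1/2) * Real.exp (-x2/2) *
        max (Real.logb 2 (1 + γ1 * L1 * x1 / (γ2 * L1 * x1 + 2 * σ2)))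
            (Real.logb 2 (1 + γ1 * L2 * x2 / (γ2 * L2 * x2 + 2 * σ2))))
      = C1 (L1 / σ2) - C1 (γ2 * L1 / σ2) + C1 (L2 / σ2) - C1 (γ2 * L2 / σ2)
        - C1 (L1 * L2 / ((L1 + L2) * σ2)) + C1 (γ2 * L1 * L2 / ((L1 + L2) * σ2)) := by
  obtain ⟨hg1a, hg1b⟩ := hγ1
  obtain ⟨hg2a, hg2b⟩ := hγ2
  set c : ℝ := 2*σ2 with hcdef
  have hc : 0 < c := by positivity
  have hlog2 : 0 < Real.log 2 := Real.log_pos (by norm_num)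
  set G : ℝ → ℝ := Gf γ2 c with hGdef
  set Cb : ℝ := -Real.log γ2 with hCbdef
  have hCb : 0 < Cb := by
    have := Real.log_neg hg2a hg2b; simp only [hCbdef]; linarith
  have hGbd : ∀ u : ℝ, 0 ≤ u → |G u| ≤ Cb := by
    intro u hu
    rw [abs_of_nonneg (Gf_nonneg hg2a hg2b.le hc hu)]
    exact Gf_le hg2a hg2b.le hc hu
  have hGm : Measurable G := Gf_measurable _ _
  -- pointwise max rewriting
  have hmax : ∀ x1 : ℝ, 0 ≤ x1 → ∀ x2 : ℝ, 0 ≤ x2 →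
      max (Real.logb 2 (1 + γ1 * L1 * x1 / (γ2 * L1 * x1 + 2 * σ2)))
          (Real.logb 2 (1 + γ1 * L2 * x2 / (γ2 * L2 * x2 + 2 * σ2)))
      = (G (L1*x1) + G (L2*x2) - G (min (L1*x1) (L2*x2))) / Real.log 2 := by
    intro x1 hx1 x2 hx2
    rw [logb_eq L1 σ2 γ1 γ2 hL1 hσ hg2a hsum x1 hx1,
      logb_eq L2 σ2 γ1 γ2 hL2 hσ hg2a hsum x2 hx2,
      max_div_div_right hlog2.le]
    simp only [hGdef, ← hcdef]
    congr 1
    rw [← Gf_min hg2a hg2b.le hc (mul_nonneg hL1.le hx1) (mul_nonneg hL2.le hx2)]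
    have := max_add_min (Gf γ2 c (L1*x1)) (Gf γ2 c (L2*x2))
    linarith
  -- main objects
  set S : Set (ℝ×ℝ) := {p : ℝ×ℝ | L2*p.2 ≤ L1*p.1} with hSdef
  have hS : MeasurableSet S := measurableSet_le (measurable_snd.const_mul L2)
    (measurable_fst.const_mul L1)
  set Φ : ℝ×ℝ → ℝ :=
    fun p => S.indicator (fun q => Real.exp (-(2⁻¹*q.2)) * G (L2*q.2)) p with hΦdef
  have hΦm : Measurable Φ := by
    apply Measurable.indicator _ hS
    exact (Real.continuous_exp.measurable.comp
      ((measurable_snd.const_mul (2:ℝ)⁻¹).neg)).mul (hGm.comp (measurable_snd.const_mul L2))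
  set Mfun : ℝ → ℝ :=
    fun x1 => ∫ x2 in Ioi (0:ℝ), Real.exp (-(2⁻¹*x2)) * G (min (L1*x1) (L2*x2)) with hMdef
  set Mind : ℝ → ℝ := fun x1 => ∫ x2 in Ioi (0:ℝ), Φ (x1, x2) with hMinddef
  set Q2 : ℝ := ∫ x2 in Ioi (0:ℝ), Real.exp (-(2⁻¹*x2)) * G (L2*x2) with hQ2def
  have half_pos : (0:ℝ) < 2⁻¹ := by norm_num
  -- integrability of inner pieces
  have ib : IntegrableOn (fun x2 => Real.exp (-(2⁻¹*x2)) * G (L2*x2)) (Ioi 0) :=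
    int_exp_G (hGm.comp (measurable_id.const_mul L2)) half_pos
      (fun x hx => hGbd _ (mul_nonneg hL2.le (le_of_lt hx)))
  have ic : ∀ x1 : ℝ, 0 ≤ x1 →
      IntegrableOn (fun x2 => Real.exp (-(2⁻¹*x2)) * G (min (L1*x1) (L2*x2))) (Ioi 0) := by
    intro x1 hx1
    apply int_exp_G (hGm.comp (measurable_const.min (measurable_id.const_mul L2))) half_pos
    intro x hx
    exact hGbd _ (le_min (mul_nonneg hL1.le hx1) (mul_nonneg hL2.le (le_of_lt hx)))
  have tail2 : ∀ a : ℝ, ∫ x in Ioi a, Real.exp (-(2⁻¹*x)) = 2 * Real.exp (-(2⁻¹*a)) := by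
    intro a; rw [tail_exp 2⁻¹ a half_pos]; norm_num
  -- inner integral evaluation
  have hinner : ∀ x1 ∈ Ioi (0:ℝ),
      (∫ x2 in Set.Ioi (0:ℝ),
        (1/4) * Real.exp (-x1/2) * Real.exp (-x2/2) *
          max (Real.logb 2 (1 + γ1 * L1 * x1 / (γ2 * L1 * x1 + 2 * σ2)))
              (Real.logb 2 (1 + γ1 * L2 * x2 / (γ2 * L2 * x2 + 2 * σ2))))
      = (Real.log 2)⁻¹ * ((1/4) * Real.exp (-(2⁻¹*x1)) *
          (2 * G (L1*x1) + Q2 - Mfun x1)) := by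
    intro x1 hx1
    have hx1' : (0:ℝ) ≤ x1 := le_of_lt hx1
    have step1 : (∫ x2 in Set.Ioi (0:ℝ),
        (1/4) * Real.exp (-x1/2) * Real.exp (-x2/2) *
          max (Real.logb 2 (1 + γ1 * L1 * x1 / (γ2 * L1 * x1 + 2 * σ2)))
              (Real.logb 2 (1 + γ1 * L2 * x2 / (γ2 * L2 * x2 + 2 * σ2))))
        = ∫ x2 in Set.Ioi (0:ℝ), (Real.log 2)⁻¹ * ((1/4) * Real.exp (-(2⁻¹*x1)) *
            (Real.exp (-(2⁻¹*x2)) * G (L1*x1) + Real.exp (-(2⁻¹*x2)) * G (L2*x2)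
              - Real.exp (-(2⁻¹*x2)) * G (min (L1*x1) (L2*x2)))) := by
      apply setIntegral_congr_fun measurableSet_Ioi
      intro x2 hx2
      dsimp only
      rw [hmax x1 hx1' x2 (le_of_lt hx2)]
      rw [show -x1/2 = -(2⁻¹*x1) by ring, show -x2/2 = -(2⁻¹*x2) by ring]
      field_simp
    rw [step1, integral_const_mul]
    congr 1
    rw [integral_const_mul]
    congr 1
    have ia : IntegrableOn (fun x2 => Real.exp (-(2⁻¹*x2)) * G (L1*x1)) (Ioi 0) :=
      int_exp_G measurable_const half_pos (fun x _ => hGbd _ (mul_nonneg hL1.le hx1'))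
    have iab : IntegrableOn (fun x2 => Real.exp (-(2⁻¹*x2)) * G (L1*x1)
        + Real.exp (-(2⁻¹*x2)) * G (L2*x2)) (Ioi 0) := ia.add ib
    rw [integral_sub iab (ic x1 hx1'), integral_add ia ib]
    rw [integral_mul_const, tail2 0]
    simp only [hMdef, hQ2def]
    norm_num
  -- section function of Φ
  have hΦsec : ∀ x1 : ℝ, (fun x2 => Φ (x1, x2))
      = ({y : ℝ | L2*y ≤ L1*x1}).indicator (fun x2 => Real.exp (-(2⁻¹*x2)) * G (L2*x2)) := by
    intro x1
    funext x2
    by_cases h : L2*x2 ≤ L1*x1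
    · rw [show Φ (x1,x2) = S.indicator (fun q => Real.exp (-(2⁻¹*q.2)) * G (L2*q.2)) (x1,x2) from rfl,
        Set.indicator_of_mem (show (x1,x2) ∈ S from h),
        Set.indicator_of_mem (show x2 ∈ {y : ℝ | L2*y ≤ L1*x1} from h)]
    · rw [show Φ (x1,x2) = S.indicator (fun q => Real.exp (-(2⁻¹*q.2)) * G (L2*q.2)) (x1,x2) from rfl,
        Set.indicator_of_notMem (show (x1,x2) ∉ S from h),
        Set.indicator_of_notMem (show x2 ∉ {y : ℝ | L2*y ≤ L1*x1} from h)]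
  -- decomposition of Mfun
  have hsplit : ∀ x1 ∈ Ioi (0:ℝ),
      Mfun x1 = Mind x1 + G (L1*x1) * (2 * Real.exp (-(2⁻¹*(L1/L2)*x1))) := by
    intro x1 hx1
    have hx1' : (0:ℝ) < x1 := hx1
    set m : ℝ := L1*x1/L2 with hmdef
    have hm : (0:ℝ) < m := by positivity
    have hiu : Ioc (0:ℝ) m ∪ Ioi m = Ioi 0 := Ioc_union_Ioi_eq_Ioi hm.le
    have int1 : IntegrableOn (fun x2 => Real.exp (-(2⁻¹*x2)) * G (min (L1*x1) (L2*x2)))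
        (Ioc 0 m) := (ic x1 hx1'.le).mono_set (by rw [← hiu]; exact subset_union_left)
    have int2 : IntegrableOn (fun x2 => Real.exp (-(2⁻¹*x2)) * G (min (L1*x1) (L2*x2)))
        (Ioi m) := (ic x1 hx1'.le).mono_set (by rw [← hiu]; exact subset_union_right)
    have hstep : Mfun x1 = (∫ x2 in Ioc (0:ℝ) m, Real.exp (-(2⁻¹*x2)) * G (min (L1*x1) (L2*x2)))
        + ∫ x2 in Ioi m, Real.exp (-(2⁻¹*x2)) * G (min (L1*x1) (L2*x2)) := by
      rw [show Mfun x1 = ∫ x2 in Ioi (0:ℝ), Real.exp (-(2⁻¹*x2)) * G (min (L1*x1) (L2*x2)) from rfl,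
        ← hiu, setIntegral_union (Ioc_disjoint_Ioi le_rfl) measurableSet_Ioi int1 int2]
    have hp1 : (∫ x2 in Ioc (0:ℝ) m, Real.exp (-(2⁻¹*x2)) * G (min (L1*x1) (L2*x2)))
        = Mind x1 := by
      have hsetm : {y : ℝ | L2*y ≤ L1*x1} = Iic m := by
        ext y
        simp only [mem_setOf_eq, mem_Iic, hmdef, le_div_iff₀ hL2]
        constructor <;> intro h <;> linarith [h, mul_comm L2 y]
      have e1 : (∫ x2 in Ioc (0:ℝ) m, Real.exp (-(2⁻¹*x2)) * G (min (L1*x1) (L2*x2)))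
          = ∫ x2 in Ioc (0:ℝ) m, Real.exp (-(2⁻¹*x2)) * G (L2*x2) := by
        apply setIntegral_congr_fun measurableSet_Ioc
        intro x2 hx2
        dsimp only
        congr 1
        congr 1
        apply min_eq_right
        have := hx2.2
        rw [hmdef, le_div_iff₀ hL2] at this
        linarith [mul_comm x2 L2]
      rw [e1, show Mind x1 = ∫ x2 in Ioi (0:ℝ), Φ (x1, x2) from rfl]
      conv_rhs => rw [show (fun x2 => Φ (x1, x2)) = ({y : ℝ | L2*y ≤ L1*x1}).indicator
        (fun x2 => Real.exp (-(2⁻¹*x2)) * G (L2*x2)) from hΦsec x1]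
      rw [hsetm, integral_indicator measurableSet_Iic,
        Measure.restrict_restrict measurableSet_Iic, inter_comm, Ioi_inter_Iic]
    have hp2 : (∫ x2 in Ioi m, Real.exp (-(2⁻¹*x2)) * G (min (L1*x1) (L2*x2)))
        = G (L1*x1) * (2 * Real.exp (-(2⁻¹*(L1/L2)*x1))) := by
      have e1 : (∫ x2 in Ioi m, Real.exp (-(2⁻¹*x2)) * G (min (L1*x1) (L2*x2)))
          = ∫ x2 in Ioi m, Real.exp (-(2⁻¹*x2)) * G (L1*x1) := by
        apply setIntegral_congr_fun measurableSet_Ioi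
        intro x2 hx2
        dsimp only
        congr 1
        congr 1
        apply min_eq_left
        have := le_of_lt hx2.out
        rw [hmdef, div_le_iff₀ hL2] at this
        linarith [mul_comm x2 L2]
      rw [e1, integral_mul_const, tail2 m]
      rw [show 2⁻¹*m = 2⁻¹*(L1/L2)*x1 by rw [hmdef]; ring]
      ring
    rw [hstep, hp1, hp2]
  -- measurability of Mind and Mfun
  have hMindMeas : Measurable Mind := by
    have h1 : StronglyMeasurable Φ := hΦm.stronglyMeasurable
    exact (h1.integral_prod_right' (ν := volume.restrict (Ioi 0))).measurable
  have hMfunMeas : Measurable Mfun := by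
    have h1 : StronglyMeasurable (fun p : ℝ×ℝ => Real.exp (-(2⁻¹*p.2)) * G (min (L1*p.1) (L2*p.2))) :=
      ((Real.continuous_exp.measurable.comp ((measurable_snd.const_mul (2:ℝ)⁻¹).neg)).mul
        (hGm.comp ((measurable_fst.const_mul L1).min (measurable_snd.const_mul L2)))).stronglyMeasurable
    exact (h1.integral_prod_right' (ν := volume.restrict (Ioi 0))).measurable
  -- the integrable bound function
  have ibound : IntegrableOn (fun x : ℝ => Cb * Real.exp (-(2⁻¹*x))) (Ioi 0) := by
    simpa [neg_mul, IntegrableOn] using (exp_neg_integrableOn_Ioi 0 half_pos).const_mul Cb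
  have iboundval : (∫ x in Ioi (0:ℝ), Cb * Real.exp (-(2⁻¹*x))) = 2*Cb := by
    rw [integral_const_mul, tail2 0]
    norm_num
    ring
  -- bound for Mfun
  have hMfunBd : ∀ x1 ∈ Ioi (0:ℝ), |Mfun x1| ≤ 2*Cb := by
    intro x1 hx1
    have hx1' : (0:ℝ) ≤ x1 := le_of_lt hx1
    rw [← Real.norm_eq_abs, ← iboundval]
    calc ‖Mfun x1‖ ≤ ∫ x2 in Ioi (0:ℝ), ‖Real.exp (-(2⁻¹*x2)) * G (min (L1*x1) (L2*x2))‖ :=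
        norm_integral_le_integral_norm _
      _ ≤ ∫ x in Ioi (0:ℝ), Cb * Real.exp (-(2⁻¹*x)) := by
        apply setIntegral_mono_on (ic x1 hx1').norm ibound measurableSet_Ioi
        intro x2 hx2
        rw [norm_mul, Real.norm_eq_abs, Real.norm_eq_abs, abs_of_pos (Real.exp_pos _)]
        have hb := hGbd (min (L1*x1) (L2*x2))
          (le_min (mul_nonneg hL1.le hx1') (mul_nonneg hL2.le (le_of_lt hx2)))
        nlinarith [Real.exp_pos (-(2⁻¹*x2)), abs_nonneg (G (min (L1*x1) (L2*x2)))]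
  -- bound for Mind
  have hMindBd : ∀ x1 ∈ Ioi (0:ℝ), |Mind x1| ≤ 2*Cb := by
    intro x1 hx1
    have intsec : IntegrableOn (fun x2 => Φ (x1, x2)) (Ioi 0) := by
      rw [hΦsec x1]
      exact ib.indicator (measurableSet_le (measurable_id.const_mul L2) measurable_const)
    rw [← Real.norm_eq_abs, ← iboundval]
    calc ‖Mind x1‖ ≤ ∫ x2 in Ioi (0:ℝ), ‖Φ (x1, x2)‖ := norm_integral_le_integral_norm _
      _ ≤ ∫ x in Ioi (0:ℝ), Cb * Real.exp (-(2⁻¹*x)) := by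
        apply setIntegral_mono_on intsec.norm ibound measurableSet_Ioi
        intro x2 hx2
        calc ‖Φ (x1, x2)‖ ≤ ‖Real.exp (-(2⁻¹*x2)) * G (L2*x2)‖ := by
              rw [show Φ (x1,x2) = S.indicator (fun q => Real.exp (-(2⁻¹*q.2)) * G (L2*q.2)) (x1,x2) from rfl]
              exact norm_indicator_le_norm_self _ _
          _ ≤ Cb * Real.exp (-(2⁻¹*x2)) := by
              rw [norm_mul, Real.norm_eq_abs, Real.norm_eq_abs, abs_of_pos (Real.exp_pos _)]
              have hb := hGbd (L2*x2) (mul_nonneg hL2.le (le_of_lt hx2))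
              nlinarith [Real.exp_pos (-(2⁻¹*x2)), abs_nonneg (G (L2*x2))]
  set mu3 : ℝ := (L1+L2)/(2*L2) with hmu3def
  set mu4 : ℝ := (L1+L2)/(2*L1) with hmu4def
  have hmu3 : (0:ℝ) < mu3 := by rw [hmu3def]; positivity
  have hmu4 : (0:ℝ) < mu4 := by rw [hmu4def]; positivity
  have iexp : IntegrableOn (fun y : ℝ => Real.exp (-(2⁻¹*y))) (Ioi 0) := by
    simpa [neg_mul] using exp_neg_integrableOn_Ioi 0 half_pos
  -- Fubini
  have hFint : Integrable (Function.uncurry fun x1 x2 => Real.exp (-(2⁻¹*x1)) * Φ (x1,x2))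
      ((volume.restrict (Ioi 0)).prod (volume.restrict (Ioi 0))) := by
    have hg : Integrable (fun p : ℝ×ℝ => (Cb * Real.exp (-(2⁻¹*p.1))) * Real.exp (-(2⁻¹*p.2)))
        ((volume.restrict (Ioi 0)).prod (volume.restrict (Ioi 0))) :=
      Integrable.mul_prod ibound iexp
    apply Integrable.mono' hg
    · exact ((Real.continuous_exp.measurable.comp ((measurable_fst.const_mul (2:ℝ)⁻¹).neg)).mul
        (hΦm.comp (measurable_fst.prodMk measurable_snd))).aestronglyMeasurable
    · rw [Measure.prod_restrict]
      filter_upwards [ae_restrict_mem (measurableSet_Ioi.prod measurableSet_Ioi)] with p hp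
      have hp2 : p.2 ∈ Ioi (0:ℝ) := hp.2
      show ‖Real.exp (-(2⁻¹*p.1)) * Φ (p.1, p.2)‖ ≤ _
      rw [norm_mul, Real.norm_eq_abs, abs_of_pos (Real.exp_pos _)]
      have h1 : ‖Φ (p.1, p.2)‖ ≤ Cb * Real.exp (-(2⁻¹*p.2)) := by
        calc ‖Φ (p.1, p.2)‖ ≤ ‖Real.exp (-(2⁻¹*p.2)) * G (L2*p.2)‖ := by
              rw [show Φ (p.1,p.2) = S.indicator
                (fun q => Real.exp (-(2⁻¹*q.2)) * G (L2*q.2)) (p.1,p.2) from rfl]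
              exact norm_indicator_le_norm_self _ _
          _ ≤ Cb * Real.exp (-(2⁻¹*p.2)) := by
              rw [norm_mul, Real.norm_eq_abs, Real.norm_eq_abs, abs_of_pos (Real.exp_pos _)]
              have hb := hGbd (L2*p.2) (mul_nonneg hL2.le (le_of_lt hp2))
              nlinarith [Real.exp_pos (-(2⁻¹*p.2)), abs_nonneg (G (L2*p.2))]
      calc Real.exp (-(2⁻¹*p.1)) * ‖Φ (p.1, p.2)‖
          ≤ Real.exp (-(2⁻¹*p.1)) * (Cb * Real.exp (-(2⁻¹*p.2))) :=
            mul_le_mul_of_nonneg_left h1 (le_of_lt (Real.exp_pos _))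
        _ = (Cb * Real.exp (-(2⁻¹*p.1))) * Real.exp (-(2⁻¹*p.2)) := by ring
  have hfub : (∫ x1 in Ioi (0:ℝ), Real.exp (-(2⁻¹*x1)) * Mind x1)
      = ∫ x2 in Ioi (0:ℝ), Real.exp (-(mu4*x2)) * (2 * G (L2*x2)) := by
    have h1 : ∀ x1 ∈ Ioi (0:ℝ), Real.exp (-(2⁻¹*x1)) * Mind x1
        = ∫ x2 in Ioi (0:ℝ), Real.exp (-(2⁻¹*x1)) * Φ (x1, x2) :=
      fun x1 _ => (integral_const_mul _ _).symm
    rw [setIntegral_congr_fun measurableSet_Ioi h1, integral_integral_swap hFint]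
    apply setIntegral_congr_fun measurableSet_Ioi
    intro x2 hx2
    have hx2' : (0:ℝ) < x2 := hx2
    dsimp only
    set m' : ℝ := L2*x2/L1 with hm'def
    have hm' : (0:ℝ) < m' := by rw [hm'def]; positivity
    have hind : (fun x1 => Real.exp (-(2⁻¹*x1)) * Φ (x1,x2))
        = (Ici m').indicator (fun x1 => Real.exp (-(2⁻¹*x1))
            * (Real.exp (-(2⁻¹*x2)) * G (L2*x2))) := by
      funext x1
      by_cases h : L2*x2 ≤ L1*x1
      · have h2 : x1 ∈ Ici m' := by
          rw [mem_Ici, hm'def, div_le_iff₀ hL1]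
          linarith [mul_comm x1 L1]
        rw [show Φ (x1,x2) = S.indicator
          (fun q => Real.exp (-(2⁻¹*q.2)) * G (L2*q.2)) (x1,x2) from rfl,
          Set.indicator_of_mem (show (x1,x2) ∈ S from h), Set.indicator_of_mem h2]
      · have h2 : x1 ∉ Ici m' := by
          rw [mem_Ici, hm'def, div_le_iff₀ hL1]
          intro hcon
          exact h (by linarith [mul_comm x1 L1])
        rw [show Φ (x1,x2) = S.indicator
          (fun q => Real.exp (-(2⁻¹*q.2)) * G (L2*q.2)) (x1,x2) from rfl,
          Set.indicator_of_notMem (show (x1,x2) ∉ S from h), Set.indicator_of_notMem h2,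
          mul_zero]
    rw [hind, integral_indicator measurableSet_Ici,
      Measure.restrict_restrict measurableSet_Ici,
      show Ici m' ∩ Ioi 0 = Ici m' from
        inter_eq_self_of_subset_left (fun y hy => lt_of_lt_of_le hm' hy),
      integral_Ici_eq_integral_Ioi, integral_mul_const, tail2 m']
    rw [show -(mu4*x2) = -(2⁻¹*m') + -(2⁻¹*x2) from by
      rw [hm'def, hmu4def]; field_simp; ring, Real.exp_add]
    ring
  -- outer integrabilities
  have oa : IntegrableOn (fun x1 => Real.exp (-(2⁻¹*x1)) * (2*G (L1*x1))) (Ioi 0) := by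
    apply int_exp_G ((hGm.comp (measurable_id.const_mul L1)).const_mul 2) half_pos
    intro x hx
    calc |(2:ℝ)*G (L1*x)| = 2*|G (L1*x)| := by rw [abs_mul]; norm_num
      _ ≤ 2*Cb := by
          have := hGbd (L1*x) (mul_nonneg hL1.le (le_of_lt hx)); linarith
  have ob : IntegrableOn (fun x1 => Real.exp (-(2⁻¹*x1)) * Q2) (Ioi 0) :=
    int_exp_G measurable_const half_pos (fun x _ => le_refl |Q2|)
  have oc : IntegrableOn (fun x1 => Real.exp (-(2⁻¹*x1)) * Mfun x1) (Ioi 0) :=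
    int_exp_G hMfunMeas half_pos hMfunBd
  have od : IntegrableOn (fun x1 => Real.exp (-(2⁻¹*x1)) * Mind x1) (Ioi 0) :=
    int_exp_G hMindMeas half_pos hMindBd
  have oe : IntegrableOn (fun x1 => Real.exp (-(mu3*x1)) * (2*G (L1*x1))) (Ioi 0) := by
    apply int_exp_G ((hGm.comp (measurable_id.const_mul L1)).const_mul 2) hmu3
    intro x hx
    calc |(2:ℝ)*G (L1*x)| = 2*|G (L1*x)| := by rw [abs_mul]; norm_num
      _ ≤ 2*Cb := by
          have := hGbd (L1*x) (mul_nonneg hL1.le (le_of_lt hx)); linarith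
  -- third term decomposition
  have hthird : (∫ x1 in Ioi (0:ℝ), Real.exp (-(2⁻¹*x1)) * Mfun x1)
      = (∫ x1 in Ioi (0:ℝ), Real.exp (-(2⁻¹*x1)) * Mind x1)
        + ∫ x1 in Ioi (0:ℝ), Real.exp (-(mu3*x1)) * (2*G (L1*x1)) := by
    rw [← integral_add od oe]
    apply setIntegral_congr_fun measurableSet_Ioi
    intro x1 hx1
    dsimp only
    rw [hsplit x1 hx1]
    rw [show -(mu3*x1) = -(2⁻¹*x1) + -(2⁻¹*(L1/L2)*x1) from by
      rw [hmu3def]; field_simp; ring, Real.exp_add]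
    ring
  -- outer evaluation
  have houter : (∫ x1 in Set.Ioi (0:ℝ), ∫ x2 in Set.Ioi (0:ℝ),
      (1/4) * Real.exp (-x1/2) * Real.exp (-x2/2) *
        max (Real.logb 2 (1 + γ1 * L1 * x1 / (γ2 * L1 * x1 + 2 * σ2)))
            (Real.logb 2 (1 + γ1 * L2 * x2 / (γ2 * L2 * x2 + 2 * σ2))))
      = (Real.log 2)⁻¹ * (1/4) *
          (((∫ x1 in Ioi (0:ℝ), Real.exp (-(2⁻¹*x1)) * (2*G (L1*x1)))
            + ∫ x1 in Ioi (0:ℝ), Real.exp (-(2⁻¹*x1)) * Q2)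
          - ∫ x1 in Ioi (0:ℝ), Real.exp (-(2⁻¹*x1)) * Mfun x1) := by
    rw [setIntegral_congr_fun measurableSet_Ioi hinner]
    rw [show (fun x1 => (Real.log 2)⁻¹ * ((1/4) * Real.exp (-(2⁻¹*x1))
        * (2 * G (L1*x1) + Q2 - Mfun x1)))
      = fun x1 => ((Real.log 2)⁻¹ * (1/4)) * ((Real.exp (-(2⁻¹*x1)) * (2*G (L1*x1))
          + Real.exp (-(2⁻¹*x1)) * Q2) - Real.exp (-(2⁻¹*x1)) * (Mfun x1)) from
      funext fun x1 => by ring]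
    rw [integral_const_mul]
    have oab : IntegrableOn (fun x1 => Real.exp (-(2⁻¹*x1)) * (2*G (L1*x1))
        + Real.exp (-(2⁻¹*x1)) * Q2) (Ioi 0) := oa.add ob
    rw [integral_sub oab oc, integral_add oa ob]
  -- values of single integrals
  have t1 : (∫ x1 in Ioi (0:ℝ), Real.exp (-(2⁻¹*x1)) * (2*G (L1*x1)))
      = 2*(((2:ℝ)⁻¹)⁻¹ * Real.log 2 * (C1 (L1/(c*2⁻¹)) - C1 (γ2*L1/(c*2⁻¹)))) := by
    rw [show (fun x1 => Real.exp (-(2⁻¹*x1)) * (2*G (L1*x1)))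
      = fun x1 => 2*(Real.exp (-(2⁻¹*x1)) * Gf γ2 c (L1*x1)) from funext fun _ => by
        simp only [hGdef]; ring]
    rw [integral_const_mul, single' L1 c γ2 2⁻¹ hL1 hc hg2a half_pos]
  have t2 : (∫ x1 in Ioi (0:ℝ), Real.exp (-(2⁻¹*x1)) * Q2) = 2*Q2 := by
    rw [integral_mul_const, tail2 0]
    norm_num
  have tQ2 : Q2 = ((2:ℝ)⁻¹)⁻¹ * Real.log 2 * (C1 (L2/(c*2⁻¹)) - C1 (γ2*L2/(c*2⁻¹))) := by
    rw [hQ2def, show (fun x2 => Real.exp (-(2⁻¹*x2)) * G (L2*x2))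
      = fun x2 => Real.exp (-(2⁻¹*x2)) * Gf γ2 c (L2*x2) from funext fun _ => by
        simp only [hGdef]]
    exact single' L2 c γ2 2⁻¹ hL2 hc hg2a half_pos
  have t3 : (∫ x2 in Ioi (0:ℝ), Real.exp (-(mu4*x2)) * (2 * G (L2*x2)))
      = 2*(mu4⁻¹ * Real.log 2 * (C1 (L2/(c*mu4)) - C1 (γ2*L2/(c*mu4)))) := by
    rw [show (fun x2 => Real.exp (-(mu4*x2)) * (2*G (L2*x2)))
      = fun x2 => 2*(Real.exp (-(mu4*x2)) * Gf γ2 c (L2*x2)) from funext fun _ => by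
        simp only [hGdef]; ring]
    rw [integral_const_mul, single' L2 c γ2 mu4 hL2 hc hg2a hmu4]
  have t4 : (∫ x1 in Ioi (0:ℝ), Real.exp (-(mu3*x1)) * (2*G (L1*x1)))
      = 2*(mu3⁻¹ * Real.log 2 * (C1 (L1/(c*mu3)) - C1 (γ2*L1/(c*mu3)))) := by
    rw [show (fun x1 => Real.exp (-(mu3*x1)) * (2*G (L1*x1)))
      = fun x1 => 2*(Real.exp (-(mu3*x1)) * Gf γ2 c (L1*x1)) from funext fun _ => by
        simp only [hGdef]; ring]
    rw [integral_const_mul, single' L1 c γ2 mu3 hL1 hc hg2a hmu3]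
  -- argument simplifications
  have hLL : (0:ℝ) < L1 + L2 := by positivity
  have a1 : L1/(c*2⁻¹) = L1/σ2 := by rw [hcdef]; congr 1; ring
  have a2 : γ2*L1/(c*2⁻¹) = γ2*L1/σ2 := by rw [hcdef]; congr 1; ring
  have a3 : L2/(c*2⁻¹) = L2/σ2 := by rw [hcdef]; congr 1; ring
  have a4 : γ2*L2/(c*2⁻¹) = γ2*L2/σ2 := by rw [hcdef]; congr 1; ring
  have hne1 : σ2 ≠ 0 := hσ.ne'
  have hne2 : L1 ≠ 0 := hL1.ne'
  have hne3 : L2 ≠ 0 := hL2.ne'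
  have hne4 : L1 + L2 ≠ 0 := hLL.ne'
  have a5 : L2/(c*mu4) = L1*L2/((L1+L2)*σ2) := by
    rw [hcdef, hmu4def, div_eq_div_iff (by positivity) (by positivity)]
    field_simp
  have a6 : γ2*L2/(c*mu4) = γ2*L1*L2/((L1+L2)*σ2) := by
    rw [hcdef, hmu4def, div_eq_div_iff (by positivity) (by positivity)]
    field_simp
  have a7 : L1/(c*mu3) = L1*L2/((L1+L2)*σ2) := by
    rw [hcdef, hmu3def, div_eq_div_iff (by positivity) (by positivity)]
    field_simp
  have a8 : γ2*L1/(c*mu3) = γ2*L1*L2/((L1+L2)*σ2) := by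
    rw [hcdef, hmu3def, div_eq_div_iff (by positivity) (by positivity)]
    field_simp
  rw [houter, hthird, hfub, t1, t2, tQ2, t3, t4, a1, a2, a3, a4, a5, a6, a7, a8,
    hmu3def, hmu4def]
  have hlog2' : Real.log 2 ≠ 0 := ne_of_gt hlog2
  field_simp
  ring
end

section
/- Let L₁, L₂, σ² > 0 and γ₂ ∈ (0,1). Then ∫_0^∞ (1/2)(e^{-x/2} − e^{-((L₁+L₂)/(2L₂)) x}) [ log₂(1 + L₁x/(2σ²)) − log₂(1 + γ₂L₁x/(2σ²)) ] dx = C₁(L₁/σ²) − C₁(γ₂L₁/σ²) − (L₂/(L₁+L₂)) [ C₁(L₁L₂/((L₁+L₂)σ²)) − C₁(γ₂L₁L₂/((L₁+L₂)σ²)) ]. -/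
open Real MeasureTheory Set

lemma expMulLogb_integrable (l a : ℝ) (hl : 0 < l) (ha : 0 ≤ a) :
    IntegrableOn (fun x => Real.exp (-l*x) * Real.logb 2 (1+a*x)) (Ioi 0) := by
  have hc : (0:ℝ) < Real.log 2 := Real.log_pos one_lt_two
  apply Integrable.mono' (g := fun x => (2*a/(l*Real.log 2)) * Real.exp (-(l/2)*x))
  · exact ((exp_neg_integrableOn_Ioi 0 (by positivity)).const_mul _)
  · apply Measurable.aestronglyMeasurable
    unfold Real.logb
    exact (measurable_exp.comp (measurable_const.mul measurable_id)).mul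
      ((Real.measurable_log.comp (measurable_const.add (measurable_const.mul measurable_id))).div
        measurable_const)
  · filter_upwards [ae_restrict_mem measurableSet_Ioi] with x hx
    have hx0 : 0 < x := hx
    have hax : (1:ℝ) ≤ 1 + a*x := by nlinarith
    have hlogb0 : 0 ≤ Real.logb 2 (1+a*x) := Real.logb_nonneg one_lt_two hax
    rw [Real.norm_eq_abs, abs_of_nonneg (mul_nonneg (Real.exp_pos _).le hlogb0)]
    have hlog : Real.log (1+a*x) ≤ a*x := by
      have := Real.log_le_sub_one_of_pos (show (0:ℝ) < 1 + a*x by linarith)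
      linarith
    have hlogb : Real.logb 2 (1+a*x) ≤ a*x / Real.log 2 := by
      rw [Real.logb]
      exact div_le_div_of_nonneg_right hlog hc.le
    have hxe : x * Real.exp (-(l/2)*x) ≤ 2/l := by
      have h1 : l/2*x + 1 ≤ Real.exp (l/2*x) := Real.add_one_le_exp _
      have h2 : Real.exp (-(l/2)*x) = (Real.exp (l/2*x))⁻¹ := by
        rw [← Real.exp_neg]; ring_nf
      rw [h2, le_div_iff₀ hl, mul_comm (x * _) l, ← mul_assoc,
        mul_inv_le_iff₀ (Real.exp_pos _)]
      nlinarith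
    have hsplit : Real.exp (-l*x) = Real.exp (-(l/2)*x) * Real.exp (-(l/2)*x) := by
      rw [← Real.exp_add]; ring_nf
    calc Real.exp (-l*x) * Real.logb 2 (1+a*x)
        ≤ Real.exp (-l*x) * (a*x / Real.log 2) :=
          mul_le_mul_of_nonneg_left hlogb (Real.exp_pos _).le
      _ = (a/Real.log 2) * (x * Real.exp (-(l/2)*x)) * Real.exp (-(l/2)*x) := by
          rw [hsplit]; ring
      _ ≤ (a/Real.log 2) * (2/l) * Real.exp (-(l/2)*x) := by
          apply mul_le_mul_of_nonneg_right _ (Real.exp_pos _).le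
          exact mul_le_mul_of_nonneg_left hxe (by positivity)
      _ = (2*a/(l*Real.log 2)) * Real.exp (-(l/2)*x) := by
          field_simp

lemma expMulInv_integrable (l a : ℝ) (hl : 0 < l) (ha : 0 ≤ a) :
    IntegrableOn (fun x => Real.exp (-l*x) * (a / ((1+a*x) * Real.log 2))) (Ioi 0) := by
  have hc : (0:ℝ) < Real.log 2 := Real.log_pos one_lt_two
  apply Integrable.mono' (g := fun x => (a/Real.log 2) * Real.exp (-l*x))
  · exact ((exp_neg_integrableOn_Ioi 0 hl).const_mul _)
  · apply Measurable.aestronglyMeasurable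
    exact (measurable_exp.comp (measurable_const.mul measurable_id)).mul
      (measurable_const.div ((measurable_const.add (measurable_const.mul measurable_id)).mul
        measurable_const))
  · filter_upwards [ae_restrict_mem measurableSet_Ioi] with x hx
    have hx0 : 0 < x := hx
    have hax : (1:ℝ) ≤ 1 + a*x := by nlinarith
    have h0 : 0 < (1+a*x) * Real.log 2 := by positivity
    rw [Real.norm_eq_abs, abs_of_nonneg (mul_nonneg (Real.exp_pos _).le (by positivity))]
    rw [mul_comm (a/Real.log 2)]
    apply mul_le_mul_of_nonneg_left _ (Real.exp_pos _).le
    rw [div_le_div_iff₀ h0 hc]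
    nlinarith [mul_nonneg (mul_nonneg ha hx0.le) hc.le]

lemma key_integral (l a : ℝ) (hl : 0 < l) (ha : 0 < a) :
    ∫ x in Ioi (0:ℝ), l * Real.exp (-l*x) * Real.logb 2 (1+a*x) = C1 (a/l) := by
  have hc : (0:ℝ) < Real.log 2 := Real.log_pos one_lt_two
  set c := Real.log 2 with hcdef
  have hfint : IntegrableOn (fun x => l * (Real.exp (-l*x) * Real.logb 2 (1+a*x))) (Ioi 0) :=
    (expMulLogb_integrable l a hl ha.le).const_mul l
  have hhint : IntegrableOn (fun x => Real.exp (-l*x) * (a / ((1+a*x) * c))) (Ioi 0) :=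
    expMulInv_integrable l a hl ha.le
  set G : ℝ → ℝ := fun x => -(Real.exp (-l*x) * Real.logb 2 (1+a*x)) with hGdef
  have hderiv : ∀ x ∈ Ici (0:ℝ), HasDerivAt G
      (l * (Real.exp (-l*x) * Real.logb 2 (1+a*x)) - Real.exp (-l*x) * (a / ((1+a*x) * c))) x := by
    intro x hx
    have hax : (0:ℝ) < 1 + a*x := by
      have : 0 ≤ a*x := mul_nonneg ha.le hx
      linarith
    have d0 : HasDerivAt (fun y : ℝ => -l*y) (-l) x := by
      simpa only [mul_one] using (hasDerivAt_id' x).const_mul (-l)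
    have d1 : HasDerivAt (fun x : ℝ => Real.exp (-l*x)) (Real.exp (-l*x) * (-l)) x :=
      (Real.hasDerivAt_exp (-l*x)).comp x d0
    have d2 : HasDerivAt (fun x : ℝ => (1:ℝ) + a*x) a x := by
      simpa only [mul_one] using ((hasDerivAt_id' x).const_mul a).const_add 1
    have d3 : HasDerivAt (fun x : ℝ => Real.log (1+a*x)) ((1+a*x)⁻¹ * a) x :=
      by have := (Real.hasDerivAt_log hax.ne').comp x d2; exact this
    have d4 : HasDerivAt (fun x : ℝ => Real.logb 2 (1+a*x)) ((1+a*x)⁻¹ * a / c) x := by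
      unfold Real.logb
      exact d3.div_const c
    have : HasDerivAt G _ x := (d1.mul d4).neg
    convert this using 1
    unfold Real.logb
    field_simp
    ring
  have hG0 : G 0 = 0 := by simp [hGdef]
  have hGlim : Filter.Tendsto G Filter.atTop (nhds 0) := by
    rw [show (0:ℝ) = -0 by norm_num]
    apply Filter.Tendsto.neg
    apply squeeze_zero' (g := fun x => (2*a/(l*c)) * Real.exp (-(l/2)*x))
    · filter_upwards [Filter.eventually_ge_atTop (1:ℝ)] with x hx
      have hax : (1:ℝ) ≤ 1 + a*x := by nlinarith
      exact mul_nonneg (Real.exp_pos _).le (Real.logb_nonneg one_lt_two hax)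
    · filter_upwards [Filter.eventually_ge_atTop (1:ℝ)] with x hx
      have hx0 : (0:ℝ) < x := by linarith
      have hax : (1:ℝ) ≤ 1 + a*x := by nlinarith
      have hlog : Real.log (1+a*x) ≤ a*x := by
        have := Real.log_le_sub_one_of_pos (show (0:ℝ) < 1 + a*x by linarith)
        linarith
      have hlogb : Real.logb 2 (1+a*x) ≤ a*x / c := by
        rw [Real.logb]
        exact div_le_div_of_nonneg_right hlog hc.le
      have hxe : x * Real.exp (-(l/2)*x) ≤ 2/l := by
        have h1 : l/2*x + 1 ≤ Real.exp (l/2*x) := Real.add_one_le_exp _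
        have h2 : Real.exp (-(l/2)*x) = (Real.exp (l/2*x))⁻¹ := by
          rw [← Real.exp_neg]; ring_nf
        rw [h2, le_div_iff₀ hl, mul_comm (x * _) l, ← mul_assoc,
          mul_inv_le_iff₀ (Real.exp_pos _)]
        nlinarith
      have hsplit : Real.exp (-l*x) = Real.exp (-(l/2)*x) * Real.exp (-(l/2)*x) := by
        rw [← Real.exp_add]; ring_nf
      calc Real.exp (-l*x) * Real.logb 2 (1+a*x)
          ≤ Real.exp (-l*x) * (a*x / c) :=
            mul_le_mul_of_nonneg_left hlogb (Real.exp_pos _).le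
        _ = (a/c) * (x * Real.exp (-(l/2)*x)) * Real.exp (-(l/2)*x) := by
            rw [hsplit]; ring
        _ ≤ (a/c) * (2/l) * Real.exp (-(l/2)*x) := by
            apply mul_le_mul_of_nonneg_right _ (Real.exp_pos _).le
            exact mul_le_mul_of_nonneg_left hxe (by positivity)
        _ = (2*a/(l*c)) * Real.exp (-(l/2)*x) := by field_simp
    · rw [show (0:ℝ) = (2*a/(l*c)) * 0 by ring]
      apply Filter.Tendsto.const_mul
      apply Real.tendsto_exp_atBot.comp
      have h1 : Filter.Tendsto (fun x : ℝ => (l/2)*x) Filter.atTop Filter.atTop :=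
        Filter.Tendsto.const_mul_atTop (by positivity) Filter.tendsto_id
      exact Filter.Tendsto.congr (fun x => (neg_mul (l/2) x).symm)
        (Filter.tendsto_neg_atTop_atBot.comp h1)
  have hFTC := integral_Ioi_of_hasDerivAt_of_tendsto' hderiv (hfint.sub hhint) hGlim
  rw [integral_sub hfint hhint, hG0, sub_zero] at hFTC
  have step1 : ∫ x in Ioi (0:ℝ), l * Real.exp (-l*x) * Real.logb 2 (1+a*x)
      = ∫ x in Ioi (0:ℝ), Real.exp (-l*x) * (a / ((1+a*x) * c)) := by
    simp only [mul_assoc]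
    linarith [hFTC]
  set I := ∫ x in Ioi (0:ℝ), Real.exp (-l*x) * (1+a*x)⁻¹ with hIdef
  have step2 : ∫ x in Ioi (0:ℝ), Real.exp (-l*x) * (a / ((1+a*x)*c)) = (a/c) * I := by
    have triv : ∀ x : ℝ, Real.exp (-l*x) * (a / ((1+a*x) * c))
        = (a/c) * (Real.exp (-l*x) * (1+a*x)⁻¹) := by
      intro x; rw [div_eq_mul_inv a ((1+a*x)*c), mul_inv]; ring
    simp only [triv]
    rw [integral_const_mul]
  -- substitution for C1
  have sub1 : ∫ t in Ioi (1:ℝ), t⁻¹ * Real.exp (-t/(a/l))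
      = ∫ x in Ioi (0:ℝ), (x+1)⁻¹ * Real.exp (-(x+1)/(a/l)) := by
    rw [show Ioi (0:ℝ) = (· + (1:ℝ)) ⁻¹' Ioi 1 by ext x; simp [lt_add_iff_pos_left]]
    exact ((measurePreserving_add_right volume (1:ℝ)).setIntegral_preimage_emb
      (MeasurableEquiv.addRight (1:ℝ)).measurableEmbedding _ _).symm
  have sub2 := integral_comp_mul_left_Ioi
    (fun x => (x+1)⁻¹ * Real.exp (-(x+1)/(a/l))) 0 ha
  simp only [mul_zero, smul_eq_mul] at sub2
  have sub2' : ∫ x in Ioi (0:ℝ), (x+1)⁻¹ * Real.exp (-(x+1)/(a/l))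
      = a * ∫ x in Ioi (0:ℝ), (a*x+1)⁻¹ * Real.exp (-(a*x+1)/(a/l)) := by
    rw [sub2, ← mul_assoc, mul_inv_cancel₀ ha.ne', one_mul]
  have sub3 : ∀ x : ℝ, (a*x+1)⁻¹ * Real.exp (-(a*x+1)/(a/l))
      = Real.exp (-(l/a)) * (Real.exp (-l*x) * (1+a*x)⁻¹) := by
    intro x
    have harg : -(a*x+1)/(a/l) = -(l/a) + -l*x := by
      field_simp; ring
    rw [harg, Real.exp_add, show a*x+1 = 1+a*x from by ring]
    ring
  have sub4 : ∫ x in Ioi (0:ℝ), (a*x+1)⁻¹ * Real.exp (-(a*x+1)/(a/l))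
      = Real.exp (-(l/a)) * I := by
    simp only [sub3]
    rw [integral_const_mul]
  rw [step1, step2]
  unfold C1
  rw [one_div_div, sub1, sub2', sub4]
  have hexp : Real.exp (l/a) * Real.exp (-(l/a)) = 1 := by
    rw [← Real.exp_add]; simp
  rw [show (1:ℝ)/c * Real.exp (l/a) * (a * (Real.exp (-(l/a)) * I))
      = (Real.exp (l/a) * Real.exp (-(l/a))) * ((a/c) * I) from by ring, hexp, one_mul]

theorem stmt5 (L1 L2 σ2 γ2 : ℝ) (hL1 : 0 < L1) (hL2 : 0 < L2) (hσ : 0 < σ2)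
    (hγ2 : γ2 ∈ Set.Ioo (0:ℝ) 1) :
    (∫ x in Set.Ioi (0:ℝ),
      (1/2) * (Real.exp (-x/2) - Real.exp (-((L1 + L2) / (2 * L2)) * x)) *
        (Real.logb 2 (1 + L1 * x / (2 * σ2)) - Real.logb 2 (1 + γ2 * L1 * x / (2 * σ2))))
      = C1 (L1 / σ2) - C1 (γ2 * L1 / σ2)
        - (L2 / (L1 + L2)) *
          (C1 (L1 * L2 / ((L1 + L2) * σ2)) - C1 (γ2 * L1 * L2 / ((L1 + L2) * σ2))) := by
  obtain ⟨hγ0, hγ1⟩ := hγ2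
  set a1 := L1 / (2*σ2) with ha1def
  set a2 := γ2 * L1 / (2*σ2) with ha2def
  set μ := (L1 + L2) / (2*L2) with hμdef
  have ha1 : 0 < a1 := by positivity
  have ha2 : 0 < a2 := by positivity
  have hμ : 0 < μ := by positivity
  have hLL : 0 < L1 + L2 := by linarith
  set c2 := L2 / (L1+L2) with hc2def
  have hc2μ : c2 * μ = 1/2 := by
    rw [hc2def, hμdef]; field_simp
  -- pointwise rewrite
  have hfun : ∀ x : ℝ,
      (1/2) * (Real.exp (-x/2) - Real.exp (-((L1 + L2) / (2 * L2)) * x)) *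
        (Real.logb 2 (1 + L1 * x / (2 * σ2)) - Real.logb 2 (1 + γ2 * L1 * x / (2 * σ2)))
      = ((1/2) * (Real.exp (-(1/2)*x) * Real.logb 2 (1+a1*x))
          - (1/2) * (Real.exp (-(1/2)*x) * Real.logb 2 (1+a2*x)))
        - c2 * ((μ * (Real.exp (-μ*x) * Real.logb 2 (1+a1*x)))
          - (μ * (Real.exp (-μ*x) * Real.logb 2 (1+a2*x)))) := by
    intro x
    have e1 : -x/2 = -(1/2)*x := by ring
    have e2 : 1 + L1 * x / (2*σ2) = 1 + a1*x := by rw [ha1def]; ring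
    have e3 : 1 + γ2 * L1 * x / (2*σ2) = 1 + a2*x := by rw [ha2def]; ring
    rw [e1, e2, e3, ← hμdef]
    linear_combination (Real.exp (-μ*x) * Real.logb 2 (1+a1*x)
      - Real.exp (-μ*x) * Real.logb 2 (1+a2*x)) * hc2μ
  rw [show (∫ x in Set.Ioi (0:ℝ),
      (1/2) * (Real.exp (-x/2) - Real.exp (-((L1 + L2) / (2 * L2)) * x)) *
        (Real.logb 2 (1 + L1 * x / (2 * σ2)) - Real.logb 2 (1 + γ2 * L1 * x / (2 * σ2))))
      = ∫ x in Set.Ioi (0:ℝ),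
        (((1/2) * (Real.exp (-(1/2)*x) * Real.logb 2 (1+a1*x))
          - (1/2) * (Real.exp (-(1/2)*x) * Real.logb 2 (1+a2*x)))
        - c2 * ((μ * (Real.exp (-μ*x) * Real.logb 2 (1+a1*x)))
          - (μ * (Real.exp (-μ*x) * Real.logb 2 (1+a2*x)))))
    from by exact integral_congr_ae (Filter.Eventually.of_forall hfun)]
  have i1 : IntegrableOn (fun x => (1/2:ℝ) * (Real.exp (-(1/2)*x) * Real.logb 2 (1+a1*x))) (Ioi 0) :=
    (expMulLogb_integrable (1/2) a1 (by norm_num) ha1.le).const_mul _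
  have i2 : IntegrableOn (fun x => (1/2:ℝ) * (Real.exp (-(1/2)*x) * Real.logb 2 (1+a2*x))) (Ioi 0) :=
    (expMulLogb_integrable (1/2) a2 (by norm_num) ha2.le).const_mul _
  have i3 : IntegrableOn (fun x => μ * (Real.exp (-μ*x) * Real.logb 2 (1+a1*x))) (Ioi 0) :=
    (expMulLogb_integrable μ a1 hμ ha1.le).const_mul _
  have i4 : IntegrableOn (fun x => μ * (Real.exp (-μ*x) * Real.logb 2 (1+a2*x))) (Ioi 0) :=
    (expMulLogb_integrable μ a2 hμ ha2.le).const_mul _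
  have i12 : IntegrableOn (fun x => (1/2:ℝ) * (Real.exp (-(1/2)*x) * Real.logb 2 (1+a1*x))
      - (1/2:ℝ) * (Real.exp (-(1/2)*x) * Real.logb 2 (1+a2*x))) (Ioi 0) := i1.sub i2
  have i34 : IntegrableOn (fun x => c2 * ((μ * (Real.exp (-μ*x) * Real.logb 2 (1+a1*x)))
      - (μ * (Real.exp (-μ*x) * Real.logb 2 (1+a2*x))))) (Ioi 0) := (i3.sub i4).const_mul c2
  rw [integral_sub i12 i34, integral_sub i1 i2, integral_const_mul c2, integral_sub i3 i4]
  have k1 : ∫ x in Ioi (0:ℝ), (1/2:ℝ) * (Real.exp (-(1/2)*x) * Real.logb 2 (1+a1*x)) = C1 (L1/σ2) := by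
    rw [show (L1/σ2) = a1 / (1/2) from by rw [ha1def]; field_simp]
    rw [← key_integral (1/2) a1 (by norm_num) ha1]
    simp only [mul_assoc]
  have k2 : ∫ x in Ioi (0:ℝ), (1/2:ℝ) * (Real.exp (-(1/2)*x) * Real.logb 2 (1+a2*x))
      = C1 (γ2*L1/σ2) := by
    rw [show (γ2*L1/σ2) = a2 / (1/2) from by rw [ha2def]; field_simp]
    rw [← key_integral (1/2) a2 (by norm_num) ha2]
    simp only [mul_assoc]
  have k3 : ∫ x in Ioi (0:ℝ), μ * (Real.exp (-μ*x) * Real.logb 2 (1+a1*x))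
      = C1 (L1*L2/((L1+L2)*σ2)) := by
    rw [show (L1*L2/((L1+L2)*σ2)) = a1 / μ from by
      rw [ha1def, hμdef]; field_simp]
    rw [← key_integral μ a1 hμ ha1]
    simp only [mul_assoc]
  have k4 : ∫ x in Ioi (0:ℝ), μ * (Real.exp (-μ*x) * Real.logb 2 (1+a2*x))
      = C1 (γ2*L1*L2/((L1+L2)*σ2)) := by
    rw [show (γ2*L1*L2/((L1+L2)*σ2)) = a2 / μ from by
      rw [ha2def, hμdef]; field_simp]
    rw [← key_integral μ a2 hμ ha2]
    simp only [mul_assoc]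
  rw [k1, k2, k3, k4]
end

section
/- Let L₁, L₂, σ² > 0 and γ₁, γ₂ ∈ (0,1) with γ₁ + γ₂ = 1. Then ∫_0^∞ ∫_0^∞ (1/4) e^{-x₁/2} e^{-x₂/2} · max{ log₂(1 + γ₁L₁x₁/(γ₂L₁x₁ + 2σ²)), log₂(1 + γ₁L₂x₂/(γ₂L₂x₂ + 2σ²)) } dx₁ dx₂ ≥ max{ C₁(L₁/σ²) − C₁(γ₂L₁/σ²), C₁(L₂/σ²) − C₁(γ₂L₂/σ²) }. -/
open Real MeasureTheory Set

open Filter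

lemma exp_half_int : IntegrableOn (fun x : ℝ => Real.exp (-x/2)) (Ioi (0:ℝ)) := by
  have h := exp_neg_integrableOn_Ioi 0 (show (0:ℝ) < 1/2 by norm_num)
  refine h.congr_fun (fun x _ => ?_) measurableSet_Ioi
  congr 1; ring

lemma exp_quarter_int : IntegrableOn (fun x : ℝ => Real.exp (-x/4)) (Ioi (0:ℝ)) := by
  have h := exp_neg_integrableOn_Ioi 0 (show (0:ℝ) < 1/4 by norm_num)
  refine h.congr_fun (fun x _ => ?_) measurableSet_Ioi
  congr 1; ring

lemma x_exp_bound {x : ℝ} (hx : 0 ≤ x) : x * Real.exp (-x/2) ≤ 4 * Real.exp (-x/4) := by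
  have h1 : x ≤ 4 * Real.exp (x/4) := by
    have := Real.add_one_le_exp (x/4)
    nlinarith [Real.exp_pos (x/4)]
  have h2 : Real.exp (-x/2) = Real.exp (-x/4) * Real.exp (-x/4) := by
    rw [← Real.exp_add]; congr 1; ring
  have h3 : Real.exp (x/4) * Real.exp (-x/4) = 1 := by
    rw [← Real.exp_add, show x/4 + -x/4 = 0 by ring, Real.exp_zero]
  calc x * Real.exp (-x/2) = (x * Real.exp (-x/4)) * Real.exp (-x/4) := by rw [h2]; ring
    _ ≤ (4 * Real.exp (x/4) * Real.exp (-x/4)) * Real.exp (-x/4) := by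
        have := Real.exp_pos (-x/4)
        nlinarith [mul_le_mul_of_nonneg_right h1 (le_of_lt (Real.exp_pos (-x/4)))]
    _ = 4 * Real.exp (-x/4) := by rw [mul_assoc 4, h3]; ring

/-- If `0 ≤ f x ≤ M * x` on `Ioi 0` then `exp(-x/2) * f x` is integrable there. -/
lemma integrableOn_exp_mul {f : ℝ → ℝ} (hm : Measurable f) {M : ℝ} (hM : 0 ≤ M)
    (hf : ∀ x ∈ Ioi (0:ℝ), 0 ≤ f x ∧ f x ≤ M * x) :
    IntegrableOn (fun x => Real.exp (-x/2) * f x) (Ioi (0:ℝ)) := by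
  refine Integrable.mono' ((exp_quarter_int.const_mul (4*M))) ?_ ?_
  · exact ((Real.measurable_exp.comp ((measurable_id.neg).div_const 2)).mul hm).aestronglyMeasurable
  · filter_upwards [ae_restrict_mem measurableSet_Ioi] with x hx
    obtain ⟨h0, hle⟩ := hf x hx
    have hxpos : (0:ℝ) < x := hx
    rw [Real.norm_eq_abs, abs_of_nonneg (by positivity)]
    calc Real.exp (-x/2) * f x ≤ Real.exp (-x/2) * (M*x) := by
          exact mul_le_mul_of_nonneg_left hle (le_of_lt (Real.exp_pos _))
      _ = M * (x * Real.exp (-x/2)) := by ring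
      _ ≤ M * (4 * Real.exp (-x/4)) := mul_le_mul_of_nonneg_left (x_exp_bound hxpos.le) hM
      _ = 4*M * Real.exp (-x/4) := by ring

lemma integrableOn_exp_log {c : ℝ} (hc : 0 < c) :
    IntegrableOn (fun x => Real.exp (-x/2) * Real.log (1 + c*x)) (Ioi (0:ℝ)) := by
  refine integrableOn_exp_mul (Real.measurable_log.comp (measurable_const.add (measurable_id.const_mul c))) hc.le (fun x hx => ?_)
  have hxpos : (0:ℝ) < x := hx
  have h1 : (0:ℝ) < 1 + c*x := by nlinarith
  constructor
  · exact Real.log_nonneg (by nlinarith)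
  · have := Real.log_le_sub_one_of_pos h1
    linarith

lemma integrableOn_exp_inv {c : ℝ} (hc : 0 < c) :
    IntegrableOn (fun x => Real.exp (-x/2) * (1 + c*x)⁻¹) (Ioi (0:ℝ)) := by
  refine Integrable.mono' exp_half_int ?_ ?_
  · exact ((Real.measurable_exp.comp ((measurable_id.neg).div_const 2)).mul
      ((measurable_const.add (measurable_id.const_mul c)).inv)).aestronglyMeasurable
  · filter_upwards [ae_restrict_mem measurableSet_Ioi] with x hx
    have hxpos : (0:ℝ) < x := hx
    have h1 : (0:ℝ) < 1 + c*x := by nlinarith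
    rw [Real.norm_eq_abs, abs_of_nonneg (by positivity)]
    have : (1+c*x)⁻¹ ≤ 1 := by
      rw [inv_le_one_iff₀]; right; nlinarith
    nlinarith [Real.exp_pos (-x/2), mul_le_mul_of_nonneg_left this (le_of_lt (Real.exp_pos (-x/2)))]

lemma integrableOn_inv_exp {b : ℝ} (hb : 0 < b) :
    IntegrableOn (fun t => t⁻¹ * Real.exp (-(t*b))) (Ioi (1:ℝ)) := by
  refine Integrable.mono' (exp_neg_integrableOn_Ioi 1 hb) ?_ ?_
  · exact (measurable_inv.mul
      (Real.measurable_exp.comp (measurable_id.mul_const b).neg)).aestronglyMeasurable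
  · filter_upwards [ae_restrict_mem measurableSet_Ioi] with t ht
    have h1 : (1:ℝ) < t := ht
    have h0 : (0:ℝ) < t := by linarith
    rw [Real.norm_eq_abs, abs_of_nonneg (by positivity)]
    have h2 : t⁻¹ ≤ 1 := by rw [inv_le_one_iff₀]; right; linarith
    have h3 : -(t*b) = -b*t := by ring
    rw [h3]
    nlinarith [Real.exp_pos (-b*t)]


lemma int_exp_half_val : ∫ x in Ioi (0:ℝ), Real.exp (-x/2) = 2 := by
  have h := integral_comp_mul_left_Ioi (fun x => Real.exp (-x)) 0 (show (0:ℝ) < 1/2 by norm_num)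
  simp only [mul_zero, integral_exp_neg_Ioi, neg_zero, Real.exp_zero, smul_eq_mul, mul_one] at h
  have e : ∫ x in Ioi (0:ℝ), Real.exp (-x/2) = ∫ x in Ioi (0:ℝ), Real.exp (-(1/2*x)) :=
    setIntegral_congr_fun measurableSet_Ioi (fun x _ => by norm_num; ring_nf)
  rw [e, h]; norm_num

lemma translate_Ioi (h : ℝ → ℝ) :
    ∫ t in Ioi (1:ℝ), h t = ∫ x in Ioi (0:ℝ), h (x + 1) := by
  rw [← integral_indicator measurableSet_Ioi, ← integral_indicator measurableSet_Ioi,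
    ← integral_add_right_eq_self (fun t => (Ioi (1:ℝ)).indicator h t) 1]
  congr 1; funext x
  by_cases hx : (0:ℝ) < x
  · rw [indicator_of_mem (by simpa using hx), indicator_of_mem (by simpa using hx)]
  · rw [indicator_of_notMem (by simpa using hx), indicator_of_notMem (by simpa using hx)]


/-- Integration by parts on `(0,∞)`. -/
lemma log_integral_eq_parts {c : ℝ} (hc : 0 < c) :
    ∫ x in Ioi (0:ℝ), Real.exp (-x/2) * Real.log (1 + c*x)
      = (2*c) * ∫ x in Ioi (0:ℝ), Real.exp (-x/2) * (1 + c*x)⁻¹ := by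
  set F : ℝ → ℝ := fun x => -2 * Real.exp (-x/2) * Real.log (1 + c*x) with hF
  have hderiv : ∀ x ∈ Ici (0:ℝ), HasDerivAt F
      (Real.exp (-x/2) * Real.log (1+c*x) - (2*c) * (Real.exp (-x/2) * (1+c*x)⁻¹)) x := by
    intro x hx
    have hx0 : (0:ℝ) ≤ x := hx
    have hpos : (0:ℝ) < 1 + c*x := by nlinarith
    have h1 : HasDerivAt (fun x : ℝ => -2 * Real.exp (-x/2)) (Real.exp (-x/2)) x := by
      have hd : HasDerivAt (fun x : ℝ => -x/2) (-1/2) x := (hasDerivAt_id x).neg.div_const 2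
      have he := (Real.hasDerivAt_exp (-x/2)).comp x hd
      have h2 := he.const_mul (-2 : ℝ)
      exact h2.congr_deriv (by ring)
    have h2 : HasDerivAt (fun x : ℝ => Real.log (1 + c*x)) (c * (1+c*x)⁻¹) x := by
      have hi : HasDerivAt (fun x : ℝ => 1 + c*x) c x := by
        simpa using ((hasDerivAt_id x).const_mul c).const_add 1
      have := (Real.hasDerivAt_log (ne_of_gt hpos)).comp x hi
      exact this.congr_deriv (by ring)
    have := h1.mul h2
    exact this.congr_deriv (by ring)
  have hint : IntegrableOn (fun x => Real.exp (-x/2) * Real.log (1+c*x)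
      - (2*c) * (Real.exp (-x/2) * (1+c*x)⁻¹)) (Ioi (0:ℝ)) :=
    (integrableOn_exp_log hc).sub ((integrableOn_exp_inv hc).const_mul _)
  have htend : Tendsto F atTop (nhds 0) := by
    apply squeeze_zero_norm' (a := fun x => (8*c) * Real.exp (-x/4))
    · filter_upwards [eventually_ge_atTop (0:ℝ)] with x hx
      have hpos : (0:ℝ) < 1 + c*x := by nlinarith
      have hlog : Real.log (1+c*x) ≤ c*x := by
        have := Real.log_le_sub_one_of_pos hpos; linarith
      have hlog0 : 0 ≤ Real.log (1+c*x) := Real.log_nonneg (by nlinarith)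
      rw [hF]
      simp only [Real.norm_eq_abs]
      rw [abs_of_nonpos (by nlinarith [Real.exp_pos (-x/2)])]
      have h1 : Real.exp (-x/2) * Real.log (1+c*x) ≤ Real.exp (-x/2) * (c*x) :=
        mul_le_mul_of_nonneg_left hlog (le_of_lt (Real.exp_pos _))
      have h2 : x * Real.exp (-x/2) ≤ 4 * Real.exp (-x/4) := x_exp_bound hx
      nlinarith [Real.exp_pos (-x/2), Real.exp_pos (-x/4)]
    · have h1 : Tendsto (fun x : ℝ => -x/4) atTop atBot :=
        (tendsto_neg_atTop_atBot).atBot_div_const (by norm_num)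
      have := (Real.tendsto_exp_atBot.comp h1).const_mul (8*c)
      simpa using this
  have h0 := integral_Ioi_of_hasDerivAt_of_tendsto' hderiv hint htend
  have hF0 : F 0 = 0 := by simp [hF]
  rw [hF0, sub_zero] at h0
  have hsplit := integral_sub (integrableOn_exp_log hc) ((integrableOn_exp_inv hc).const_mul (2*c))
  rw [hsplit] at h0
  have := sub_eq_zero.mp h0
  rw [this, ← integral_const_mul]


/-- The key closed form. -/
lemma log_integral_closed {c b : ℝ} (hc : 0 < c) (hb : c * b = 1/2) :
    ∫ x in Ioi (0:ℝ), Real.exp (-x/2) * Real.log (1 + c*x)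
      = 2 * (Real.exp b * ∫ t in Ioi (1:ℝ), t⁻¹ * Real.exp (-(t*b))) := by
  have hbpos : 0 < b := by
    rcases lt_trichotomy b 0 with h|h|h
    · nlinarith
    · rw [h] at hb; norm_num at hb
    · exact h
  rw [log_integral_eq_parts hc]
  -- substitution x ↦ c * x in ∫ exp(-(x*b)) * (1+x)⁻¹
  have hsub := integral_comp_mul_left_Ioi (fun x => Real.exp (-(x*b)) * (1+x)⁻¹) 0 hc
  simp only [mul_zero, smul_eq_mul] at hsub
  -- hsub : ∫ x in Ioi 0, exp (-(c*x*b)) * (1+c*x)⁻¹ = c⁻¹ * ∫ x in Ioi 0, exp(-(x*b)) * (1+x)⁻¹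
  have e1 : ∫ x in Ioi (0:ℝ), Real.exp (-x/2) * (1 + c*x)⁻¹
      = c⁻¹ * ∫ x in Ioi (0:ℝ), Real.exp (-(x*b)) * (1+x)⁻¹ := by
    rw [← hsub]
    refine setIntegral_congr_fun measurableSet_Ioi (fun x _ => ?_)
    have : -(c*x*b) = -x/2 := by
      have : c*x*b = x * (c*b) := by ring
      rw [this, hb]; ring
    rw [this]
  rw [e1]
  -- translation
  have e2 : ∫ t in Ioi (1:ℝ), t⁻¹ * Real.exp (-(t*b))
      = Real.exp (-b) * ∫ x in Ioi (0:ℝ), Real.exp (-(x*b)) * (1+x)⁻¹ := by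
    rw [translate_Ioi (fun t => t⁻¹ * Real.exp (-(t*b))), ← integral_const_mul]
    refine setIntegral_congr_fun measurableSet_Ioi (fun x _ => ?_)
    rw [show Real.exp (-b) * (Real.exp (-(x*b)) * (1+x)⁻¹)
        = (1+x)⁻¹ * (Real.exp (-b) * Real.exp (-(x*b))) by ring, ← Real.exp_add,
      show -b + -(x*b) = -((x+1)*b) by ring, add_comm x 1]
  rw [e2]
  rw [show Real.exp b * (Real.exp (-b) * ∫ x in Ioi (0:ℝ), Real.exp (-(x*b)) * (1+x)⁻¹)
      = (Real.exp b * Real.exp (-b)) * ∫ x in Ioi (0:ℝ), Real.exp (-(x*b)) * (1+x)⁻¹ by ring,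
    ← Real.exp_add, show b + -b = 0 by ring, Real.exp_zero]
  field_simp
  simp only [mul_comm b]


lemma expectation_eq (L σ2 γ1 γ2 : ℝ) (hL : 0 < L) (hσ : 0 < σ2)
    (hγ1 : 0 < γ1) (hγ2 : 0 < γ2) (hsum : γ1 + γ2 = 1) :
    ∫ x in Ioi (0:ℝ), (1/2) * Real.exp (-x/2) * Real.logb 2 (1 + γ1*L*x/(γ2*L*x+2*σ2))
      = C1 (L/σ2) - C1 (γ2*L/σ2) := by
  have hγ1e : γ1 = 1 - γ2 := by linarith
  set c1 : ℝ := L/(2*σ2) with hc1def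
  set c2 : ℝ := γ2*L/(2*σ2) with hc2def
  have hc1 : 0 < c1 := by positivity
  have hc2 : 0 < c2 := by positivity
  -- pointwise rewriting
  have hpt : ∀ x ∈ Ioi (0:ℝ),
      (1/2) * Real.exp (-x/2) * Real.logb 2 (1 + γ1*L*x/(γ2*L*x+2*σ2))
        = (1/(2*Real.log 2)) * (Real.exp (-x/2) * Real.log (1 + c1*x)
            - Real.exp (-x/2) * Real.log (1 + c2*x)) := by
    intro x hx
    have hx0 : (0:ℝ) < x := hx
    have hd : (0:ℝ) < γ2*L*x+2*σ2 := by positivity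
    have h1x : (0:ℝ) < 1 + c1*x := by positivity
    have h2x : (0:ℝ) < 1 + c2*x := by positivity
    have hr : 1 + γ1*L*x/(γ2*L*x+2*σ2) = (1+c1*x)/(1+c2*x) := by
      rw [hγ1e, hc1def, hc2def]
      field_simp
      ring
    rw [hr, Real.logb, Real.log_div (ne_of_gt h1x) (ne_of_gt h2x)]
    field_simp
  rw [setIntegral_congr_fun measurableSet_Ioi hpt, integral_const_mul,
    integral_sub (integrableOn_exp_log hc1) (integrableOn_exp_log hc2),
    log_integral_closed hc1 (show c1 * (σ2/L) = 1/2 by rw [hc1def]; field_simp),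
    log_integral_closed hc2 (show c2 * (σ2/(γ2*L)) = 1/2 by rw [hc2def]; field_simp)]
  have hC : ∀ y b : ℝ, 0 < y → b = 1/y →
      C1 y = (1/Real.log 2) * (Real.exp b * ∫ t in Ioi (1:ℝ), t⁻¹ * Real.exp (-(t*b))) := by
    intro y b hy hb
    rw [C1, hb]
    rw [show ∫ t in Ioi (1:ℝ), t⁻¹ * Real.exp (-t/y)
        = ∫ t in Ioi (1:ℝ), t⁻¹ * Real.exp (-(t*(1/y))) from
      setIntegral_congr_fun measurableSet_Ioi (fun t _ => by rw [show -(t*(1/y)) = -t/y by ring])]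
    ring
  rw [hC (L/σ2) (σ2/L) (by positivity) (one_div_div L σ2).symm,
    hC (γ2*L/σ2) (σ2/(γ2*L)) (by positivity) (one_div_div (γ2*L) σ2).symm]
  ring


lemma measA (L σ2 γ1 γ2 : ℝ) :
    Measurable (fun x : ℝ => Real.logb 2 (1 + γ1*L*x/(γ2*L*x+2*σ2))) := by
  simp only [Real.logb]
  refine Measurable.div_const (Real.measurable_log.comp ?_) _
  exact measurable_const.add ((measurable_id.const_mul (γ1*L)).div
    ((measurable_id.const_mul (γ2*L)).add_const (2*σ2)))

lemma nonnegA (L σ2 γ1 γ2 : ℝ) (hL : 0 < L) (hσ : 0 < σ2) (hγ1 : 0 ≤ γ1) (hγ2 : 0 ≤ γ2) :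
    ∀ x ∈ Ioi (0:ℝ), 0 ≤ Real.logb 2 (1 + γ1*L*x/(γ2*L*x+2*σ2)) := by
  intro x hx
  have hx0 : (0:ℝ) < x := hx
  have hd : (0:ℝ) < γ2*L*x+2*σ2 := by positivity
  apply Real.logb_nonneg (by norm_num)
  have : 0 ≤ γ1*L*x/(γ2*L*x+2*σ2) := by positivity
  linarith

lemma intA (L σ2 γ1 γ2 : ℝ) (hL : 0 < L) (hσ : 0 < σ2) (hγ1 : 0 < γ1) (hγ2 : 0 ≤ γ2) :
    IntegrableOn (fun x => Real.exp (-x/2) * Real.logb 2 (1 + γ1*L*x/(γ2*L*x+2*σ2)))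
      (Ioi (0:ℝ)) := by
  have l2 : 0 < Real.log 2 := Real.log_pos one_lt_two
  refine integrableOn_exp_mul (measA L σ2 γ1 γ2) (M := γ1*L/(2*σ2*Real.log 2)) (by positivity) ?_
  intro x hx
  have hx0 : (0:ℝ) < x := hx
  have hd : (0:ℝ) < γ2*L*x+2*σ2 := by positivity
  have hr0 : 0 ≤ γ1*L*x/(γ2*L*x+2*σ2) := by positivity
  refine ⟨nonnegA L σ2 γ1 γ2 hL hσ hγ1.le hγ2 x hx, ?_⟩
  rw [Real.logb]
  have hlog : Real.log (1 + γ1*L*x/(γ2*L*x+2*σ2)) ≤ γ1*L*x/(γ2*L*x+2*σ2) := by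
    have := Real.log_le_sub_one_of_pos (show (0:ℝ) < 1 + γ1*L*x/(γ2*L*x+2*σ2) by linarith)
    linarith
  have hrle : γ1*L*x/(γ2*L*x+2*σ2) ≤ γ1*L*x/(2*σ2) := by
    apply div_le_div_of_nonneg_left (by positivity) (by positivity)
    nlinarith [mul_nonneg (mul_nonneg hγ2 hL.le) hx0.le]
  have hM : γ1*L/(2*σ2*Real.log 2) * x = (γ1*L*x/(2*σ2))/Real.log 2 := by
    field_simp
  rw [hM]
  exact (div_le_div_iff_of_pos_right l2).mpr (hlog.trans hrle)

theorem stmt7 (L1 L2 σ2 γ1 γ2 : ℝ) (hL1 : 0 < L1) (hL2 : 0 < L2) (hσ : 0 < σ2)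
    (hγ1 : γ1 ∈ Set.Ioo (0:ℝ) 1) (hγ2 : γ2 ∈ Set.Ioo (0:ℝ) 1) (hsum : γ1 + γ2 = 1) :
    (∫ x1 in Set.Ioi (0:ℝ), ∫ x2 in Set.Ioi (0:ℝ),
      (1/4) * Real.exp (-x1/2) * Real.exp (-x2/2) *
        max (Real.logb 2 (1 + γ1 * L1 * x1 / (γ2 * L1 * x1 + 2 * σ2)))
            (Real.logb 2 (1 + γ1 * L2 * x2 / (γ2 * L2 * x2 + 2 * σ2))))
      ≥ max (C1 (L1 / σ2) - C1 (γ2 * L1 / σ2)) (C1 (L2 / σ2) - C1 (γ2 * L2 / σ2)) := by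
  obtain ⟨hγ1pos, hγ1lt⟩ := hγ1
  obtain ⟨hγ2pos, hγ2lt⟩ := hγ2
  set A : ℝ → ℝ := fun x => Real.logb 2 (1 + γ1 * L1 * x / (γ2 * L1 * x + 2 * σ2)) with hA
  set B : ℝ → ℝ := fun x => Real.logb 2 (1 + γ1 * L2 * x / (γ2 * L2 * x + 2 * σ2)) with hB
  have measA1 : Measurable A := measA L1 σ2 γ1 γ2
  have measB1 : Measurable B := measA L2 σ2 γ1 γ2
  have hA0 : ∀ x ∈ Ioi (0:ℝ), 0 ≤ A x := nonnegA L1 σ2 γ1 γ2 hL1 hσ hγ1pos.le hγ2pos.le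
  have hB0 : ∀ x ∈ Ioi (0:ℝ), 0 ≤ B x := nonnegA L2 σ2 γ1 γ2 hL2 hσ hγ1pos.le hγ2pos.le
  have intA1 : IntegrableOn (fun x => Real.exp (-x/2) * A x) (Ioi (0:ℝ)) :=
    intA L1 σ2 γ1 γ2 hL1 hσ hγ1pos hγ2pos.le
  have intB1 : IntegrableOn (fun x => Real.exp (-x/2) * B x) (Ioi (0:ℝ)) :=
    intA L2 σ2 γ1 γ2 hL2 hσ hγ1pos hγ2pos.le
  have intA2 : IntegrableOn (fun x => (1/2) * Real.exp (-x/2) * A x) (Ioi (0:ℝ)) := by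
    simpa [mul_assoc, IntegrableOn] using intA1.const_mul (1/2)
  have intB2 : IntegrableOn (fun x => (1/2) * Real.exp (-x/2) * B x) (Ioi (0:ℝ)) := by
    simpa [mul_assoc, IntegrableOn] using intB1.const_mul (1/2)
  set KA : ℝ := ∫ x in Ioi (0:ℝ), (1/2) * Real.exp (-x/2) * A x with hKAdef
  set KB : ℝ := ∫ x in Ioi (0:ℝ), (1/2) * Real.exp (-x/2) * B x with hKBdef
  have hKAval : KA = C1 (L1/σ2) - C1 (γ2*L1/σ2) :=
    expectation_eq L1 σ2 γ1 γ2 hL1 hσ hγ1pos hγ2pos hsum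
  have hKBval : KB = C1 (L2/σ2) - C1 (γ2*L2/σ2) :=
    expectation_eq L2 σ2 γ1 γ2 hL2 hσ hγ1pos hγ2pos hsum
  -- inner integrand integrability and bounds
  have innerInt : ∀ x1 ∈ Ioi (0:ℝ), IntegrableOn
      (fun x2 => (1/4) * Real.exp (-x1/2) * Real.exp (-x2/2) * max (A x1) (B x2))
      (Ioi (0:ℝ)) := by
    intro x1 hx1
    refine Integrable.mono'
      (((exp_half_int.const_mul ((1/4) * Real.exp (-x1/2) * A x1)).add
        (intB1.const_mul ((1/4) * Real.exp (-x1/2))))) ?_ ?_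
    · exact (((Real.measurable_exp.comp ((measurable_id.neg).div_const 2)).const_mul
        ((1/4) * Real.exp (-x1/2))).mul (measurable_const.max measB1)).aestronglyMeasurable
    · filter_upwards [ae_restrict_mem measurableSet_Ioi] with x2 hx2
      have e1 : (0:ℝ) < Real.exp (-x1/2) := Real.exp_pos _
      have e2 : (0:ℝ) < Real.exp (-x2/2) := Real.exp_pos _
      have hA0' := hA0 x1 hx1
      have hB0' := hB0 x2 hx2
      have hmax0 : 0 ≤ max (A x1) (B x2) := le_trans hA0' (le_max_left _ _)
      rw [Real.norm_eq_abs, abs_of_nonneg (by positivity)]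
      have hmaxle : max (A x1) (B x2) ≤ A x1 + B x2 :=
        max_le (le_add_of_nonneg_right hB0') (le_add_of_nonneg_left hA0')
      have := mul_le_mul_of_nonneg_left hmaxle (show (0:ℝ) ≤ (1/4) * Real.exp (-x1/2) * Real.exp (-x2/2) by positivity)
      calc (1/4) * Real.exp (-x1/2) * Real.exp (-x2/2) * max (A x1) (B x2)
          ≤ (1/4) * Real.exp (-x1/2) * Real.exp (-x2/2) * (A x1 + B x2) := this
        _ = (1/4) * Real.exp (-x1/2) * A x1 * Real.exp (-x2/2)
            + (1/4) * Real.exp (-x1/2) * (Real.exp (-x2/2) * B x2) := by ring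
  -- values of the two auxiliary inner integrals
  have innerA : ∀ x1 : ℝ, (∫ x2 in Ioi (0:ℝ),
      (1/4) * Real.exp (-x1/2) * Real.exp (-x2/2) * (A x1))
        = (1/2) * Real.exp (-x1/2) * A x1 := by
    intro x1
    rw [show (fun x2 => (1/4) * Real.exp (-x1/2) * Real.exp (-x2/2) * (A x1))
        = (fun x2 => ((1/4) * Real.exp (-x1/2) * A x1) * Real.exp (-x2/2)) from
      funext (fun x2 => by ring), integral_const_mul, int_exp_half_val]
    ring
  have innerB : ∀ x1 : ℝ, (∫ x2 in Ioi (0:ℝ),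
      (1/4) * Real.exp (-x1/2) * Real.exp (-x2/2) * (B x2))
        = (1/2) * Real.exp (-x1/2) * KB := by
    intro x1
    rw [show (fun x2 => (1/4) * Real.exp (-x1/2) * Real.exp (-x2/2) * (B x2))
        = (fun x2 => ((1/2) * Real.exp (-x1/2)) * ((1/2) * Real.exp (-x2/2) * B x2)) from
      funext (fun x2 => by ring), integral_const_mul, ← hKBdef]
  have intgA : ∀ x1 : ℝ, IntegrableOn
      (fun x2 => (1/4) * Real.exp (-x1/2) * Real.exp (-x2/2) * (A x1)) (Ioi (0:ℝ)) := by
    intro x1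
    have h := (exp_half_int.const_mul ((1/4) * Real.exp (-x1/2))).mul_const (A x1)
    exact IntegrableOn.congr_fun h (fun x2 _ => by ring) measurableSet_Ioi
  have intgB : ∀ x1 : ℝ, IntegrableOn
      (fun x2 => (1/4) * Real.exp (-x1/2) * Real.exp (-x2/2) * (B x2)) (Ioi (0:ℝ)) := by
    intro x1
    have h := intB1.const_mul ((1/4) * Real.exp (-x1/2))
    exact IntegrableOn.congr_fun h (fun x2 _ => by ring) measurableSet_Ioi
  -- lower bounds of the inner integral
  set F : ℝ → ℝ := fun x1 => ∫ x2 in Ioi (0:ℝ),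
      (1/4) * Real.exp (-x1/2) * Real.exp (-x2/2) * max (A x1) (B x2) with hF
  have lowA : ∀ x1 ∈ Ioi (0:ℝ), (1/2) * Real.exp (-x1/2) * A x1 ≤ F x1 := by
    intro x1 hx1
    rw [hF, ← innerA x1]
    refine setIntegral_mono_on (intgA x1) (innerInt x1 hx1) measurableSet_Ioi ?_
    intro x2 _
    exact mul_le_mul_of_nonneg_left (le_max_left _ _) (by positivity)
  have lowB : ∀ x1 ∈ Ioi (0:ℝ), (1/2) * Real.exp (-x1/2) * KB ≤ F x1 := by
    intro x1 hx1
    rw [hF, ← innerB x1]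
    refine setIntegral_mono_on (intgB x1) (innerInt x1 hx1) measurableSet_Ioi ?_
    intro x2 _
    exact mul_le_mul_of_nonneg_left (le_max_right _ _) (by positivity)
  have upF : ∀ x1 ∈ Ioi (0:ℝ),
      F x1 ≤ (1/2) * Real.exp (-x1/2) * A x1 + (1/2) * Real.exp (-x1/2) * KB := by
    intro x1 hx1
    rw [hF, ← innerA x1, ← innerB x1, ← integral_add (intgA x1) (intgB x1)]
    refine setIntegral_mono_on (innerInt x1 hx1) ((intgA x1).add (intgB x1)) measurableSet_Ioi ?_
    intro x2 hx2
    have hmaxle : max (A x1) (B x2) ≤ A x1 + B x2 :=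
      max_le (le_add_of_nonneg_right (hB0 x2 hx2)) (le_add_of_nonneg_left (hA0 x1 hx1))
    calc (1/4) * Real.exp (-x1/2) * Real.exp (-x2/2) * max (A x1) (B x2)
        ≤ (1/4) * Real.exp (-x1/2) * Real.exp (-x2/2) * (A x1 + B x2) :=
          mul_le_mul_of_nonneg_left hmaxle (by positivity)
      _ = (1/4) * Real.exp (-x1/2) * Real.exp (-x2/2) * (A x1)
          + (1/4) * Real.exp (-x1/2) * Real.exp (-x2/2) * (B x2) := by ring
  have F0 : ∀ x1 ∈ Ioi (0:ℝ), 0 ≤ F x1 := by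
    intro x1 hx1
    rw [hF]
    refine setIntegral_nonneg measurableSet_Ioi (fun x2 hx2 => ?_)
    have h1 : (0:ℝ) ≤ max (A x1) (B x2) := le_trans (hA0 x1 hx1) (le_max_left _ _)
    exact mul_nonneg (by positivity) h1
  -- measurability of F
  have Fmeas : AEStronglyMeasurable F (volume.restrict (Ioi (0:ℝ))) := by
    have hunc : Measurable (Function.uncurry (fun x1 x2 : ℝ =>
        (1/4) * Real.exp (-x1/2) * Real.exp (-x2/2) * max (A x1) (B x2))) := by
      apply Measurable.mul
      · apply Measurable.mul
        · exact (Real.measurable_exp.comp ((measurable_fst.neg).div_const 2)).const_mul (1/4)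
        · exact Real.measurable_exp.comp ((measurable_snd.neg).div_const 2)
      · exact (measA1.comp measurable_fst).max (measB1.comp measurable_snd)
    exact (hunc.stronglyMeasurable.integral_prod_right).aestronglyMeasurable
  -- integrability of F
  have Fint : IntegrableOn F (Ioi (0:ℝ)) := by
    refine Integrable.mono' (intA2.add ((exp_half_int.const_mul (1/2)).mul_const KB)) Fmeas ?_
    filter_upwards [ae_restrict_mem measurableSet_Ioi] with x1 hx1
    rw [Real.norm_eq_abs, abs_of_nonneg (F0 x1 hx1)]
    have := upF x1 hx1
    calc F x1 ≤ (1/2) * Real.exp (-x1/2) * A x1 + (1/2) * Real.exp (-x1/2) * KB := this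
      _ = (1/2) * Real.exp (-x1/2) * A x1 + (1/2) * Real.exp (-x1/2) * KB := rfl
  -- conclusion
  show (∫ x1 in Ioi (0:ℝ), F x1)
      ≥ max (C1 (L1 / σ2) - C1 (γ2 * L1 / σ2)) (C1 (L2 / σ2) - C1 (γ2 * L2 / σ2))
  rw [ge_iff_le, max_le_iff, ← hKAval, ← hKBval]
  constructor
  · rw [hKAdef]
    exact setIntegral_mono_on intA2 Fint measurableSet_Ioi lowA
  · have h1 : ∫ x1 in Ioi (0:ℝ), (1/2) * Real.exp (-x1/2) * KB = KB := by
      rw [show (fun x1 => (1/2) * Real.exp (-x1/2) * KB)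
          = (fun x1 => ((1/2) * KB) * Real.exp (-x1/2)) from funext (fun x1 => by ring),
        integral_const_mul, int_exp_half_val]
      ring
    calc KB = ∫ x1 in Ioi (0:ℝ), (1/2) * Real.exp (-x1/2) * KB := h1.symm
      _ ≤ ∫ x1 in Ioi (0:ℝ), F x1 := by
          refine setIntegral_mono_on ?_ Fint measurableSet_Ioi lowB
          have h := (exp_half_int.const_mul (1/2)).mul_const KB
          exact IntegrableOn.congr_fun h (fun x _ => rfl) measurableSet_Ioi
end
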